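/- arXiv:1308.5541 — 5 statements merged into one kernel-verified Lean document; each statement's English description precedes it below -/
import Mathlib

section
/- For every integer n ≥ 2, the inequalities 2 log n − log(4π log n) < b_n² < 2 log n hold. -/
open Real Set MeasureTheory Filter Topology

noncomputable def stdNormalCDF (x : ℝ) : ℝ :=
  (Real.sqrt (2 * Real.pi))⁻¹ * ∫ t in Set.Iic x, Real.exp (-t ^ 2 / 2)

namespace BnAux

noncomputable def E (t : ℝ) : ℝ := Real.exp (-t ^ 2 / 2)

lemma E_pos (t : ℝ) : 0 < E t := Real.exp_pos _

lemma E_eq : E = fun t => Real.exp (-(1/2) * t ^ 2) := by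
  funext t; unfold E; ring_nf

lemma contE : Continuous E := by
  unfold E
  exact Real.continuous_exp.comp (by continuity)

lemma intE : Integrable E := by
  rw [E_eq]; exact integrable_exp_neg_mul_sq (by norm_num)

lemma totalE : ∫ t, E t = Real.sqrt (2 * π) := by
  rw [E_eq, integral_gaussian]
  norm_num [mul_comm]

lemma ioiE : ∫ t in Ioi (0:ℝ), E t = Real.sqrt (2 * π) / 2 := by
  rw [E_eq, integral_gaussian_Ioi]
  norm_num [mul_comm]

lemma iic_add_ioi (x : ℝ) :
    (∫ t in Iic x, E t) + ∫ t in Ioi x, E t = Real.sqrt (2 * π) := by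
  rw [← totalE, ← integral_add_compl (measurableSet_Iic (a := x)) intE, compl_Iic]

lemma iic_eq (x : ℝ) :
    (∫ t in Iic x, E t) = (∫ t in Iic 0, E t) + ∫ t in (0:ℝ)..x, E t := by
  have h := intervalIntegral.integral_Iic_sub_Iic (intE.integrableOn (s := Iic (0:ℝ)))
    (intE.integrableOn (s := Iic x))
  linarith [h]

lemma hasDerivIic (x : ℝ) : HasDerivAt (fun y => ∫ t in Iic y, E t) (E x) x := by
  have : (fun y => ∫ t in Iic y, E t)
      = fun y => (∫ t in Iic 0, E t) + ∫ t in (0:ℝ)..y, E t := funext iic_eq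
  rw [this]
  have h : HasDerivAt (fun y => ∫ t in (0:ℝ)..y, E t) (E x) x :=
    intervalIntegral.integral_hasDerivAt_right
      (contE.intervalIntegrable _ _)
      (contE.stronglyMeasurableAtFilter _ _) contE.continuousAt
  simpa using h.const_add (∫ t in Iic (0:ℝ), E t)

noncomputable def C : ℝ := (Real.sqrt (2 * π))⁻¹

lemma C_pos : 0 < C := by
  unfold C
  positivity

lemma cdf_hasDeriv (x : ℝ) : HasDerivAt stdNormalCDF (C * E x) x := by
  have : stdNormalCDF = fun y => C * ∫ t in Iic y, E t := rfl
  rw [this]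
  exact (hasDerivIic x).const_mul _

lemma cdf_strictMono : StrictMono stdNormalCDF := by
  apply strictMono_of_deriv_pos
  intro x
  rw [(cdf_hasDeriv x).deriv]
  exact mul_pos C_pos (E_pos x)

lemma one_sub_cdf (x : ℝ) : 1 - stdNormalCDF x = C * ∫ t in Ioi x, E t := by
  have h := iic_add_ioi x
  have hs : Real.sqrt (2 * π) ≠ 0 := by positivity
  have : C * Real.sqrt (2 * π) = 1 := inv_mul_cancel₀ hs
  unfold stdNormalCDF
  rw [show (Real.sqrt (2*π))⁻¹ = C from rfl]
  have e2 : (∫ t in Iic x, Real.exp (-t^2/2)) = ∫ t in Iic x, E t := rfl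
  linear_combination (-C) * h + (-1) * this + (-C) * e2

lemma cdf_zero : stdNormalCDF 0 = 1/2 := by
  have h1 := one_sub_cdf 0
  rw [ioiE] at h1
  have hs : Real.sqrt (2 * π) ≠ 0 := by positivity
  have : C * Real.sqrt (2 * π) = 1 := inv_mul_cancel₀ hs
  nlinarith

lemma shift_integral (x : ℝ) :
    (∫ t in Ioi x, E (t - x)) = ∫ t in Ioi (0:ℝ), E t := by
  have hmp : MeasurePreserving (fun s : ℝ => s + x) volume volume :=
    measurePreserving_add_right volume x
  have hemb : MeasurableEmbedding (fun s : ℝ => s + x) :=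
    (Homeomorph.addRight x).isClosedEmbedding.measurableEmbedding
  have := hmp.setIntegral_preimage_emb hemb (fun t => E (t - x)) (Ioi x)
  have hpre : (fun s : ℝ => s + x) ⁻¹' Ioi x = Ioi 0 := by
    ext s; simp
  rw [hpre] at this
  rw [← this]
  simp

lemma chernoff {x : ℝ} (hx : 0 ≤ x) :
    (∫ t in Ioi x, E t) ≤ E x * (Real.sqrt (2 * π) / 2) := by
  have hmono : (∫ t in Ioi x, E t) ≤ ∫ t in Ioi x, E x * E (t - x) := by
    apply setIntegral_mono_on
    · exact intE.integrableOn
    · exact ((intE.comp_sub_right x).const_mul _).integrableOn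
    · exact measurableSet_Ioi
    · intro t ht
      rw [mem_Ioi] at ht
      unfold E
      rw [← Real.exp_add]
      apply Real.exp_le_exp.2
      nlinarith
  calc (∫ t in Ioi x, E t) ≤ ∫ t in Ioi x, E x * E (t - x) := hmono
    _ = E x * ∫ t in Ioi x, E (t - x) := by rw [integral_const_mul]
    _ = E x * (Real.sqrt (2 * π) / 2) := by rw [shift_integral, ioiE]

noncomputable def den (x : ℝ) : ℝ := x + Real.sqrt (x ^ 2 + 4)

lemma sqrt_lt (x : ℝ) : |x| < Real.sqrt (x ^ 2 + 4) := by
  rw [← Real.sqrt_sq_eq_abs]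
  exact Real.sqrt_lt_sqrt (sq_nonneg x) (by linarith)

lemma den_pos (x : ℝ) : 0 < den x := by
  have h := (abs_lt.1 (sqrt_lt x)).1
  unfold den; linarith

lemma sqrt_hasDeriv (x : ℝ) :
    HasDerivAt (fun y => Real.sqrt (y ^ 2 + 4)) (x / Real.sqrt (x ^ 2 + 4)) x := by
  have h1 : HasDerivAt (fun y : ℝ => y ^ 2 + 4) (2 * x) x := by
    simpa using ((hasDerivAt_pow 2 x).add_const 4)
  have hne : x ^ 2 + 4 ≠ 0 := by positivity
  have h2 := h1.sqrt hne
  convert h2 using 1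
  have hs : Real.sqrt (x ^ 2 + 4) ≠ 0 := by positivity
  field_simp

lemma den_hasDeriv (x : ℝ) :
    HasDerivAt den (1 + x / Real.sqrt (x ^ 2 + 4)) x :=
  (hasDerivAt_id x).add (sqrt_hasDeriv x)

lemma E_hasDeriv (x : ℝ) : HasDerivAt E (-x * E x) x := by
  have h1 : HasDerivAt (fun y : ℝ => -y ^ 2 / 2) (-x) x := by
    have : HasDerivAt (fun y : ℝ => -y ^ 2 / 2) _ x := ((hasDerivAt_pow 2 x).neg).div_const 2
    convert this using 1
    simp; ring
  have h2 := h1.exp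
  have : E = fun y : ℝ => Real.exp (-y ^ 2 / 2) := rfl
  rw [this]
  convert h2 using 1
  exact mul_comm _ _

noncomputable def g (x : ℝ) : ℝ := 2 * (C * E x) / den x

noncomputable def g' (x : ℝ) : ℝ :=
  (2 * (C * (-x * E x)) * den x - 2 * (C * E x) * (1 + x / Real.sqrt (x ^ 2 + 4))) / den x ^ 2

lemma g_hasDeriv (x : ℝ) : HasDerivAt g (g' x) x := by
  have hnum : HasDerivAt (fun y => 2 * (C * E y)) (2 * (C * (-x * E x))) x :=
    ((E_hasDeriv x).const_mul C).const_mul 2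
  exact hnum.div (den_hasDeriv x) (den_pos x).ne'

noncomputable def h (x : ℝ) : ℝ := (1 - stdNormalCDF x) - g x

lemma h_hasDeriv (x : ℝ) : HasDerivAt h (-(C * E x) - g' x) x := by
  have h1 : HasDerivAt (fun y => 1 - stdNormalCDF y) (-(C * E x)) x := by
    simpa using ((cdf_hasDeriv x).const_sub 1)
  exact h1.sub (g_hasDeriv x)

lemma h_deriv_nonpos (x : ℝ) : -(C * E x) - g' x ≤ 0 := by
  set s := Real.sqrt (x ^ 2 + 4) with hsdef
  have hs : 0 < s := by positivity
  have hs2 : s ^ 2 = x ^ 2 + 4 := Real.sq_sqrt (by positivity)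
  have hxs : x ≤ s := le_trans (le_abs_self x) (sqrt_lt x).le
  have hden : den x = x + s := rfl
  have hdpos : 0 < den x := den_pos x
  have hCE : 0 < C * E x := mul_pos C_pos (E_pos x)
  have key : 2 * (x * den x) + 2 * (1 + x / s) ≤ den x ^ 2 := by
    have hdiv : x / s ≤ 1 := (div_le_one hs).2 hxs
    rw [hden]
    nlinarith
  have hrw : -(C * E x) - g' x
      = ((2 * (x * den x) + 2 * (1 + x / s)) - den x ^ 2) * (C * E x) / den x ^ 2 := by
    unfold g'
    rw [← hsdef]
    field_simp
    ring
  rw [hrw]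
  apply div_nonpos_of_nonpos_of_nonneg
  · apply mul_nonpos_of_nonpos_of_nonneg _ hCE.le
    linarith
  · positivity

lemma h_antitone : Antitone h := by
  apply antitone_of_deriv_nonpos
  · exact fun x => (h_hasDeriv x).differentiableAt
  · intro x
    rw [(h_hasDeriv x).deriv]
    exact h_deriv_nonpos x

lemma E_tendsto : Tendsto E atTop (𝓝 0) := by
  have h1 : Tendsto (fun x : ℝ => -x ^ 2 / 2) atTop atBot := by
    apply Tendsto.atBot_div_const (by norm_num)
    exact tendsto_neg_atBot_iff.2 (tendsto_pow_atTop (by norm_num))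
  exact Real.tendsto_exp_atBot.comp h1

lemma tail_nonneg (x : ℝ) : 0 ≤ 1 - stdNormalCDF x := by
  rw [one_sub_cdf]
  exact mul_nonneg C_pos.le (setIntegral_nonneg measurableSet_Ioi fun t _ => (E_pos t).le)

lemma hC1 : C * Real.sqrt (2 * π) = 1 := by
  have hs : Real.sqrt (2 * π) ≠ 0 := by positivity
  exact inv_mul_cancel₀ hs

lemma tail_le {x : ℝ} (hx : 0 ≤ x) : 1 - stdNormalCDF x ≤ E x / 2 := by
  rw [one_sub_cdf]
  calc C * ∫ t in Ioi x, E t ≤ C * (E x * (Real.sqrt (2 * π) / 2)) :=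
        mul_le_mul_of_nonneg_left (chernoff hx) C_pos.le
    _ = E x / 2 := by linear_combination (E x / 2) * hC1

lemma tail_tendsto : Tendsto (fun x => 1 - stdNormalCDF x) atTop (𝓝 0) := by
  apply tendsto_of_tendsto_of_tendsto_of_le_of_le' tendsto_const_nhds
    (show Tendsto (fun x => E x / 2) atTop (𝓝 0) by simpa using E_tendsto.div_const 2)
  · exact Eventually.of_forall tail_nonneg
  · filter_upwards [eventually_ge_atTop (0:ℝ)] with x hx using tail_le hx

lemma g_nonneg (x : ℝ) : 0 ≤ g x := by
  unfold g
  have := den_pos x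
  have := C_pos
  have := E_pos x
  positivity

lemma g_tendsto : Tendsto g atTop (𝓝 0) := by
  apply tendsto_of_tendsto_of_tendsto_of_le_of_le' tendsto_const_nhds
    (show Tendsto (fun x => C * E x) atTop (𝓝 0) by simpa using E_tendsto.const_mul C)
  · exact Eventually.of_forall g_nonneg
  · filter_upwards [eventually_ge_atTop (0:ℝ)] with x hx
    have h4 : Real.sqrt 4 ≤ Real.sqrt (x ^ 2 + 4) :=
      Real.sqrt_le_sqrt (by nlinarith [sq_nonneg x])
    have h4' : Real.sqrt 4 = 2 := by
      rw [show (4:ℝ) = 2 ^ 2 by norm_num, Real.sqrt_sq (by norm_num : (0:ℝ) ≤ 2)]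
    have h2 : 2 ≤ den x := by unfold den; rw [h4'] at h4; linarith
    have hCE : 0 ≤ 2 * (C * E x) := by
      have := C_pos; have := E_pos x; positivity
    calc g x = 2 * (C * E x) / den x := rfl
      _ ≤ 2 * (C * E x) / 2 := div_le_div_of_nonneg_left hCE (by norm_num) h2
      _ = C * E x := by ring

lemma birnbaum (x : ℝ) : g x ≤ 1 - stdNormalCDF x := by
  have hlim : Tendsto h atTop (𝓝 0) := by
    have := tail_tendsto.sub g_tendsto
    rw [sub_zero] at this
    exact this
  have h0 : 0 ≤ h x := by
    apply le_of_tendsto hlim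
    filter_upwards [eventually_ge_atTop x] with y hy using h_antitone hy
  unfold h at h0
  linarith

end BnAux

set_option maxHeartbeats 1000000 in
/-- For every `n ≥ 2`, `2 log n − log(4π log n) < bₙ² < 2 log n`. -/
theorem bn_sq_bounds (n : ℕ) (hn : 2 ≤ n)
    (b : ℝ) (hb : stdNormalCDF b = 1 - 1 / (n : ℝ)) :
    2 * Real.log n - Real.log (4 * Real.pi * Real.log n) < b ^ 2 ∧
      b ^ 2 < 2 * Real.log n := by
  have hn2 : (2:ℝ) ≤ (n:ℝ) := by exact_mod_cast hn
  have hn0 : (0:ℝ) < n := by linarith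
  set L := Real.log n with hLdef
  clear_value L
  have hL2 : Real.log 2 ≤ L := by rw [hLdef]; exact Real.log_le_log (by norm_num) hn2
  have hlog2 : (0.6931:ℝ) < Real.log 2 := by
    have := Real.log_two_gt_d9; linarith
  have hL0 : 0 < L := lt_of_lt_of_le (by linarith) hL2
  have hpi : (3.1415:ℝ) < π := by have := Real.pi_gt_d6; linarith
  have he2 : Real.exp 2 < 7.39 := by
    have he1 : Real.exp 1 < 2.7182818286 := Real.exp_one_lt_d9
    have h := Real.exp_pos 1
    calc Real.exp 2 = Real.exp 1 * Real.exp 1 := by rw [← Real.exp_add]; norm_num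
      _ < 7.39 := by nlinarith
  have hkey : 2 < Real.log (4 * π * L) := by
    rw [Real.lt_log_iff_exp_lt (by positivity)]
    nlinarith
  have hinv : 1 / (n:ℝ) ≤ 1/2 := by
    rw [div_le_div_iff₀ hn0 (by norm_num)]; linarith
  have hb0 : 0 ≤ b := by
    by_contra hneg
    push_neg at hneg
    have h1 := BnAux.cdf_strictMono hneg
    rw [hb, BnAux.cdf_zero] at h1
    linarith
  have htail : 1 - stdNormalCDF b = 1 / n := by rw [hb]; ring
  -- upper bound
  have hub : b ^ 2 < 2 * L := by
    have h1 : 1 - stdNormalCDF b ≤ BnAux.E b / 2 := BnAux.tail_le hb0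
    rw [htail] at h1
    have hEb : Real.exp (-L) < BnAux.E b := by
      have he : Real.exp (-L) = 1 / n := by
        rw [hLdef, Real.exp_neg, Real.exp_log hn0, one_div]
      rw [he]
      have h1n : 0 < 1/(n:ℝ) := by positivity
      linarith
    unfold BnAux.E at hEb
    have := Real.exp_lt_exp.1 hEb
    linarith
  set A := 2 * L - Real.log (4 * π * L) with hA
  clear_value A
  have hlb : A < b ^ 2 := by
    rcases eq_or_lt_of_le hb0 with hbz | hbp
    · -- b = 0, so n = 2
      rw [← hbz]
      rw [← hbz, BnAux.cdf_zero] at hb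
      have h1 : (1:ℝ)/n = 1/2 := by linarith
      have hneq : (n:ℝ) = 2 := by
        field_simp at h1; linarith
      have hLeq : L = Real.log 2 := by rw [hLdef, hneq]
      have hlog2u : Real.log 2 < 0.6932 := by
        have := Real.log_two_lt_d9; linarith
      rw [hLeq] at hkey
      have hA0' : A < 0 := by rw [hA, hLeq]; linarith
      nlinarith
    · rcases le_or_gt A 0 with hA0 | hA0
      · nlinarith
      -- main case : Birnbaum at x0 = sqrt A
      set x0 := Real.sqrt A with hx0
      clear_value x0
      have hx0p : 0 < x0 := by rw [hx0]; exact Real.sqrt_pos.2 hA0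
      have hx0sq : x0 ^ 2 = A := by rw [hx0]; exact Real.sq_sqrt hA0.le
      set c := Real.sqrt (2 * L) with hc
      clear_value c
      have hcsq : c ^ 2 = 2 * L := by rw [hc]; exact Real.sq_sqrt (by positivity)
      have hcnn : 0 ≤ c := by rw [hc]; exact Real.sqrt_nonneg _
      have hc1 : 1 < c := by
        have h2L : (1:ℝ) < 2 * L := by nlinarith
        nlinarith
      have hcpos : 0 < c := lt_trans one_pos hc1
      set u := c - 1/c with hu
      clear_value u
      have hup : 0 < u := by
        have : 1/c < 1 := by rw [div_lt_one hcpos]; exact hc1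
        rw [hu]; linarith
      have hAu : A < u ^ 2 := by
        have e1 : u ^ 2 = c ^ 2 - 2 * (c * (1 / c)) + (1 / c) ^ 2 := by rw [hu]; ring
        have e2 : c * (1 / c) = 1 := by field_simp
        have e3 : (1 / c : ℝ) ^ 2 = 1 / (2 * L) := by rw [div_pow, one_pow, hcsq]
        rw [e1, e2, e3, hcsq, hA]
        have h1L : 0 < 1/(2*L) := by positivity
        linarith
      have hx0u : x0 < u := by
        rw [hx0]
        exact (Real.sqrt_lt' hup).2 hAu
      have hsu : Real.sqrt (x0 ^ 2 + 4) < c + 1 / c := by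
        have hcc : (c + 1/c)^2 = u^2 + 4 := by
          rw [hu]; field_simp; ring
        have h1 : x0 ^ 2 + 4 < (c + 1/c) ^ 2 := by
          rw [hcc, hx0sq]; linarith
        have h2 : 0 ≤ c + 1/c := by positivity
        calc Real.sqrt (x0^2+4) < Real.sqrt ((c+1/c)^2) :=
              Real.sqrt_lt_sqrt (by positivity) h1
          _ = c + 1/c := Real.sqrt_sq h2
      have hden : BnAux.den x0 < 2 * c := by
        unfold BnAux.den
        linarith
      have hEx0 : BnAux.E x0 = Real.sqrt (4 * π * L) / n := by
        unfold BnAux.E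
        rw [hx0sq, hA]
        rw [show -(2*L - Real.log (4*π*L))/2 = -L + Real.log (4*π*L)/2 by ring]
        rw [Real.exp_add]
        rw [show Real.log (4*π*L)/2 = Real.log (Real.sqrt (4*π*L)) by
          rw [Real.log_sqrt (by positivity)]]
        rw [Real.exp_log (by positivity), Real.exp_neg, hLdef, Real.exp_log hn0]
        ring
      have hCE : BnAux.C * BnAux.E x0 = c / n := by
        rw [hEx0]
        unfold BnAux.C
        rw [hc, show (4*π*L : ℝ) = (2*π) * (2*L) by ring,
          Real.sqrt_mul (by positivity)]
        have hs : Real.sqrt (2*π) ≠ 0 := by positivity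
        field_simp
        rw [← Real.sqrt_mul (by positivity), ← Real.sqrt_mul (by positivity)]; ring_nf
      have h1n : 0 < 1/(n:ℝ) := by positivity
      have hgx : 1 / (n:ℝ) < BnAux.g x0 := by
        rw [show BnAux.g x0 = 2 * (BnAux.C * BnAux.E x0) / BnAux.den x0 from rfl, hCE]
        rw [lt_div_iff₀ (BnAux.den_pos x0)]
        have : (1:ℝ)/n * BnAux.den x0 < 1/n * (2*c) := by
          exact mul_lt_mul_of_pos_left hden h1n
        calc (1:ℝ)/n * BnAux.den x0 < 1/n * (2*c) := this
          _ = 2 * (c/n) := by ring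
      have hlt : 1 - stdNormalCDF b < 1 - stdNormalCDF x0 := by
        rw [htail]
        exact lt_of_lt_of_le hgx (BnAux.birnbaum x0)
      have hxb : x0 < b := by
        by_contra hge
        push_neg at hge
        have := BnAux.cdf_strictMono.monotone hge
        linarith
      nlinarith
  exact ⟨hlb, hub⟩
end

section
/- For any integers n₀ ≥ 3 and n > n₀, one has b_n² > K(n₀)·log n, where K(n₀) = b_{n₀}²/log n₀; equivalently, the sequence {b_n²/log n, n ≥ 3} is strictly increasing. -/
open Real

open MeasureTheory Set Filter


noncomputable def g (t : ℝ) : ℝ := Real.exp (-t ^ 2 / 2)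

lemma g_eq : g = fun t => Real.exp (-(1/2 : ℝ) * t ^ 2) := by
  funext t; unfold g; congr 1; ring

lemma g_pos (t : ℝ) : 0 < g t := Real.exp_pos _

lemma g_le_one (t : ℝ) : g t ≤ 1 := by
  unfold g
  rw [← Real.exp_zero]
  exact Real.exp_le_exp.mpr (by nlinarith [sq_nonneg t])

lemma g_cont : Continuous g := by unfold g; continuity

lemma integrable_g : Integrable g := by
  rw [g_eq]; exact integrable_exp_neg_mul_sq (by norm_num)

lemma integral_g : ∫ t, g t = Real.sqrt (2 * π) := by
  rw [g_eq, integral_gaussian]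
  norm_num [mul_comm]

lemma integral_g_Ioi_zero : ∫ t in Ioi (0:ℝ), g t = Real.sqrt (2 * π) / 2 := by
  rw [g_eq, integral_gaussian_Ioi]
  norm_num [mul_comm]

lemma hasDerivAt_g (t : ℝ) : HasDerivAt g (-t * g t) t := by
  have h : HasDerivAt (fun t : ℝ => -t ^ 2 / 2) (-t) t := by
    have := ((hasDerivAt_pow 2 t).neg).div_const 2
    simpa using this.congr_deriv (by push_cast; ring)
  exact h.exp.congr_deriv (by unfold g; ring)





lemma s_pos : 0 < Real.sqrt (2 * π) := Real.sqrt_pos.mpr (by positivity)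

lemma Phi_eq (x : ℝ) : stdNormalCDF x = (Real.sqrt (2 * π))⁻¹ * ∫ t in Iic x, g t := rfl

lemma Phi_add (x : ℝ) :
    stdNormalCDF x + (Real.sqrt (2 * π))⁻¹ * ∫ t in Ioi x, g t = 1 := by
  rw [Phi_eq, ← mul_add,
    intervalIntegral.integral_Iic_add_Ioi integrable_g.integrableOn integrable_g.integrableOn, integral_g]
  exact inv_mul_cancel₀ (ne_of_gt s_pos)

lemma q_eq (x : ℝ) :
    1 - stdNormalCDF x = (Real.sqrt (2 * π))⁻¹ * ∫ t in Ioi x, g t := by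
  linarith [Phi_add x]

lemma integral_Ioi_pos (x : ℝ) : 0 < ∫ t in Ioi x, g t := by
  refine (setIntegral_pos_iff_support_of_nonneg_ae ?_ integrable_g.integrableOn).mpr ?_
  · exact Filter.Eventually.of_forall fun t => (g_pos t).le
  · have : Function.support g = univ := by
      ext t; simp [Function.support, ne_of_gt (g_pos t)]
    rw [this, univ_inter]
    simp [Real.volume_Ioi]

lemma q_pos (x : ℝ) : 0 < 1 - stdNormalCDF x := by
  rw [q_eq]; exact mul_pos (inv_pos.mpr s_pos) (integral_Ioi_pos x)

lemma Phi_lt_one (x : ℝ) : stdNormalCDF x < 1 := by linarith [q_pos x]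

lemma hasDerivAt_Phi (x : ℝ) :
    HasDerivAt stdNormalCDF ((Real.sqrt (2 * π))⁻¹ * g x) x := by
  have key : stdNormalCDF = fun y =>
      (Real.sqrt (2 * π))⁻¹ * ((∫ t in Iic (0:ℝ), g t) + ∫ t in (0:ℝ)..y, g t) := by
    funext y
    rw [Phi_eq]
    congr 1
    rw [← intervalIntegral.integral_Iic_sub_Iic integrable_g.integrableOn
      integrable_g.integrableOn]
    ring
  rw [key]
  have h := intervalIntegral.integral_hasDerivAt_right
    (integrable_g.intervalIntegrable)
    (g_cont.stronglyMeasurableAtFilter _ _) g_cont.continuousAt (a := (0:ℝ)) (b := x)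
  exact (h.const_add _).const_mul _

lemma Phi_strictMono : StrictMono stdNormalCDF := by
  apply strictMono_of_deriv_pos
  intro x
  rw [(hasDerivAt_Phi x).deriv]
  exact mul_pos (inv_pos.mpr s_pos) (g_pos x)

lemma Phi_zero : stdNormalCDF 0 = 1 / 2 := by
  have h := q_eq 0
  rw [integral_g_Ioi_zero] at h
  have hs := s_pos
  field_simp at h
  linarith




lemma g_tendsto : Tendsto g atTop (nhds 0) := by
  have h1 : Tendsto (fun t : ℝ => -t ^ 2 / 2) atTop atBot := by
    apply Tendsto.atBot_div_const (by norm_num)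
    exact tendsto_neg_atTop_atBot.comp (tendsto_pow_atTop two_ne_zero)
  exact Real.tendsto_exp_atBot.comp h1

lemma mills_upper {b : ℝ} (hb : 0 < b) : ∫ t in Ioi b, g t ≤ g b / b := by
  have hder : ∀ t ∈ Ici b, HasDerivAt (fun t => -g t / b) (t / b * g t) t := by
    intro t _
    have := (hasDerivAt_g t).neg.div_const b
    exact this.congr_deriv (by field_simp)
  have hint : IntegrableOn (fun t => t / b * g t) (Ioi b) := by
    have h : Integrable (fun t : ℝ => t * Real.exp (-(1/2:ℝ) * t ^ 2)) :=
      integrable_mul_exp_neg_mul_sq (by norm_num)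
    have h2 : Integrable (fun t : ℝ => t / b * g t) := by
      have := h.div_const b
      refine this.congr ?_
      refine Filter.Eventually.of_forall fun t => ?_
      show t * Real.exp (-(1/2:ℝ) * t ^ 2) / b = t / b * g t
      unfold g
      rw [show -(1/2:ℝ) * t ^ 2 = -t ^ 2 / 2 by ring]
      ring
    exact h2.integrableOn
  have htend : Tendsto (fun t => -g t / b) atTop (nhds 0) := by
    have := (g_tendsto.neg).div_const b
    simpa using this
  have key := integral_Ioi_of_hasDerivAt_of_tendsto' hder hint htend
  have heq : ∫ t in Ioi b, t / b * g t = g b / b := by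
    rw [key]; ring
  rw [← heq]
  refine setIntegral_mono_on integrable_g.integrableOn hint measurableSet_Ioi ?_
  intro t ht
  have h1 : 1 ≤ t / b := (one_le_div hb).mpr (le_of_lt ht)
  nlinarith [g_pos t]




noncomputable def mF (t : ℝ) : ℝ := t / (t ^ 2 + 1) * g t
noncomputable def mh (t : ℝ) : ℝ := (t ^ 4 + 2 * t ^ 2 - 1) / (t ^ 2 + 1) ^ 2 * g t

lemma sq1_pos (t : ℝ) : (0:ℝ) < t ^ 2 + 1 := by positivity

lemma hasDerivAt_negmF (t : ℝ) : HasDerivAt (fun t => -mF t) (mh t) t := by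
  have h1 := (hasDerivAt_id t).div ((hasDerivAt_pow 2 t).add_const 1) (ne_of_gt (sq1_pos t))
  have h2 := (h1.mul (hasDerivAt_g t)).neg
  refine h2.congr_deriv ?_
  simp only [mh, id, Pi.div_apply, Nat.cast_ofNat]
  have := sq1_pos t
  field_simp
  ring

lemma mh_abs_le (t : ℝ) : |mh t| ≤ g t := by
  unfold mh
  rw [abs_mul, abs_of_pos (g_pos t)]
  have h1 : |(t ^ 4 + 2 * t ^ 2 - 1) / (t ^ 2 + 1) ^ 2| ≤ 1 := by
    rw [abs_div, abs_of_pos (by positivity : (0:ℝ) < (t ^ 2 + 1) ^ 2)]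
    rw [div_le_one (by positivity)]
    rw [abs_le]
    constructor <;> nlinarith [sq_nonneg t, sq_nonneg (t^2)]
  nlinarith [g_pos t, abs_nonneg ((t ^ 4 + 2 * t ^ 2 - 1) / (t ^ 2 + 1) ^ 2)]

lemma mh_cont : Continuous mh := by
  unfold mh
  have h : Continuous fun t : ℝ => (t ^ 4 + 2 * t ^ 2 - 1) / (t ^ 2 + 1) ^ 2 := by
    apply Continuous.div (by continuity) (by continuity)
    intro t; positivity
  exact h.mul g_cont

lemma mh_integrableOn (b : ℝ) : IntegrableOn mh (Ioi b) := by
  refine Integrable.mono integrable_g.integrableOn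
    (mh_cont.aestronglyMeasurable.restrict) ?_
  refine Filter.Eventually.of_forall fun t => ?_
  rw [Real.norm_eq_abs, Real.norm_eq_abs, abs_of_pos (g_pos t)]
  exact mh_abs_le t

lemma mF_tendsto : Tendsto (fun t => -mF t) atTop (nhds 0) := by
  have h : Tendsto mF atTop (nhds 0) := by
    apply squeeze_zero' (g := g)
    · filter_upwards [eventually_ge_atTop (0:ℝ)] with t ht
      exact mul_nonneg (div_nonneg ht (sq1_pos t).le) (g_pos t).le
    · filter_upwards [eventually_ge_atTop (0:ℝ)] with t ht
      show t / (t ^ 2 + 1) * g t ≤ g t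
      nlinarith [g_pos t, (div_le_one (sq1_pos t)).mpr (by nlinarith : t ≤ t ^ 2 + 1)]
    · exact g_tendsto
  simpa using h.neg

lemma mills_lower (b : ℝ) : b / (b ^ 2 + 1) * g b ≤ ∫ t in Ioi b, g t := by
  have key := integral_Ioi_of_hasDerivAt_of_tendsto'
    (fun t _ => hasDerivAt_negmF t) (mh_integrableOn b) mF_tendsto
  have hle : ∫ t in Ioi b, mh t ≤ ∫ t in Ioi b, g t := by
    refine setIntegral_mono_on (mh_integrableOn b) integrable_g.integrableOn
      measurableSet_Ioi ?_
    intro t _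
    calc mh t ≤ |mh t| := le_abs_self _
    _ ≤ g t := mh_abs_le t
  calc b / (b ^ 2 + 1) * g b = ∫ t in Ioi b, mh t := by rw [key]; unfold mF; ring
  _ ≤ ∫ t in Ioi b, g t := hle






lemma s_ge : (5/2 : ℝ) ≤ Real.sqrt (2 * π) := by
  rw [show (5/2:ℝ) = Real.sqrt ((5/2)^2) by rw [Real.sqrt_sq]; norm_num]
  apply Real.sqrt_le_sqrt
  nlinarith [Real.pi_gt_d6]

lemma s_inv_le : (Real.sqrt (2 * π))⁻¹ ≤ 2/5 := by
  rw [show (2/5:ℝ) = (5/2:ℝ)⁻¹ by norm_num]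
  exact inv_anti₀ (by norm_num) s_ge

lemma log_three_ge : (1:ℝ) ≤ Real.log 3 := by
  rw [Real.le_log_iff_exp_le (by norm_num)]
  calc Real.exp 1 ≤ 2.7182818286 := Real.exp_one_lt_d9.le
  _ ≤ 3 := by norm_num

lemma two_log_s : (1.69 : ℝ) ≤ 2 * Real.log (Real.sqrt (2 * π)) := by
  have h0 : Real.log (Real.sqrt (2 * π) ^ 2) = 2 * Real.log (Real.sqrt (2 * π)) := by
    rw [Real.log_pow]; norm_num
  have h1 : 2 * Real.log (Real.sqrt (2 * π)) = Real.log (2 * π) := by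
    rw [← h0, Real.sq_sqrt (by positivity)]
  rw [h1]
  have h6 : Real.log 6 ≤ Real.log (2 * π) :=
    Real.log_le_log (by norm_num) (by nlinarith [Real.pi_gt_three])
  have h2 : Real.log 6 = Real.log 2 + Real.log 3 := by
    rw [← Real.log_mul (by norm_num) (by norm_num)]; norm_num
  nlinarith [Real.log_two_gt_d9, log_three_ge]

lemma Phi_le_of_nonneg {b : ℝ} (hb : 0 ≤ b) :
    stdNormalCDF b ≤ 1/2 + (Real.sqrt (2 * π))⁻¹ * b := by
  have h1 : ∫ t in Iic b, g t = (∫ t in Iic (0:ℝ), g t) + ∫ t in (0:ℝ)..b, g t := by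
    rw [← intervalIntegral.integral_Iic_sub_Iic integrable_g.integrableOn
      integrable_g.integrableOn]
    ring
  have h2a : ∫ t in (0:ℝ)..b, g t ≤ ∫ t in (0:ℝ)..b, (1:ℝ) :=
    intervalIntegral.integral_mono_on hb integrable_g.intervalIntegrable
      intervalIntegrable_const (fun t _ => g_le_one t)
  have h2 : ∫ t in (0:ℝ)..b, g t ≤ b := by simpa using h2a
  have h3 : stdNormalCDF b = stdNormalCDF 0 + (Real.sqrt (2 * π))⁻¹ * ∫ t in (0:ℝ)..b, g t := by
    rw [Phi_eq, Phi_eq, h1]; ring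
  rw [h3, Phi_zero]
  have := inv_pos.mpr s_pos
  nlinarith

/-- Key inequality: `b φ(b) < 2 q (-log q)` when `q ≤ 1/3` and `b > 0`. -/
lemma key {b : ℝ} (hb : 0 < b) (hq3 : 1 - stdNormalCDF b ≤ 1/3) :
    b * ((Real.sqrt (2 * π))⁻¹ * g b) <
      2 * (1 - stdNormalCDF b) * (-Real.log (1 - stdNormalCDF b)) := by
  set s := Real.sqrt (2 * π) with hs
  set q := 1 - stdNormalCDF b with hqdef
  have hq0 : 0 < q := q_pos b
  have hL1 : 1 ≤ -Real.log q := by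
    have := Real.log_le_log hq0 hq3
    have h13 : Real.log (1/3 : ℝ) = -Real.log 3 := by
      rw [one_div, Real.log_inv]
    nlinarith [log_three_ge]
  have hsi : (0:ℝ) < s⁻¹ := inv_pos.mpr s_pos
  rcases le_or_gt b (3/4) with hsml | hlrg
  · -- small case
    have hql : 1/5 ≤ q := by
      have := Phi_le_of_nonneg hb.le
      have h2 : s⁻¹ * b ≤ (2/5) * (3/4) := by
        have := s_inv_le
        nlinarith
      rw [hqdef]
      nlinarith
    have hlhs : b * (s⁻¹ * g b) ≤ 3/10 := by
      have h1 := g_le_one b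
      have h2 := g_pos b
      have h3 := s_inv_le
      have e1 : s⁻¹ * g b ≤ 2/5 := by nlinarith
      have e2 := mul_le_mul hsml e1 (by positivity) (by norm_num)
      linarith
    have hrhs : (2:ℝ)/5 ≤ 2 * q * (-Real.log q) := by
      nlinarith
    linarith
  · -- large case
    have hq_up : q ≤ s⁻¹ * (g b / b) := by
      rw [hqdef, q_eq]
      have := mills_upper hb
      nlinarith
    have hq_lo : s⁻¹ * (b / (b ^ 2 + 1) * g b) ≤ q := by
      rw [hqdef, q_eq]
      have := mills_lower b
      nlinarith
    have hgb := g_pos b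
    have hb2 : (0:ℝ) < b ^ 2 + 1 := by positivity
    -- lower bound for L = -log q
    have hA : Real.log s + Real.log b + b ^ 2 / 2 ≤ -Real.log q := by
      have h1 : Real.log q ≤ Real.log (s⁻¹ * (g b / b)) := Real.log_le_log hq0 hq_up
      have h2 : Real.log (s⁻¹ * (g b / b)) = -Real.log s + (-b ^ 2 / 2 - Real.log b) := by
        rw [Real.log_mul (ne_of_gt hsi) (by positivity), Real.log_inv,
          Real.log_div (ne_of_gt hgb) (ne_of_gt hb)]
        unfold g
        rw [Real.log_exp]
      linarith
    have hlogb : -(1/3 : ℝ) ≤ Real.log b := by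
      have h1 : Real.log (4/3 : ℝ) ≤ 4/3 - 1 := Real.log_le_sub_one_of_pos (by norm_num)
      have h2 : Real.log (3/4 : ℝ) ≤ Real.log b :=
        Real.log_le_log (by norm_num) hlrg.le
      have h3 : Real.log (3/4 : ℝ) = -Real.log (4/3 : ℝ) := by
        rw [show (3/4:ℝ) = (4/3:ℝ)⁻¹ by norm_num, Real.log_inv]
      linarith
    have h2A : b ^ 2 + 1 + 1/50 ≤ 2 * (Real.log s + Real.log b + b ^ 2 / 2) := by
      have := two_log_s
      rw [← hs] at this
      linarith
    have hApos : (0:ℝ) < Real.log s + Real.log b + b ^ 2 / 2 := by nlinarith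
    have hqlo' : (0:ℝ) < s⁻¹ * (b / (b ^ 2 + 1) * g b) := by positivity
    have hd : b / (b ^ 2 + 1) * (b ^ 2 + 1) = b := by field_simp
    have hdpos : 0 < b / (b ^ 2 + 1) := by positivity
    calc b * (s⁻¹ * g b)
        < s⁻¹ * (b / (b ^ 2 + 1) * g b) * (b ^ 2 + 1 + 1/50) := by
          nlinarith [mul_pos (mul_pos hsi hgb) hdpos]
      _ ≤ 2 * (s⁻¹ * (b / (b ^ 2 + 1) * g b)) * (Real.log s + Real.log b + b ^ 2 / 2) := by
          nlinarith [mul_le_mul_of_nonneg_left h2A hqlo'.le]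
      _ ≤ 2 * q * (-Real.log q) := by
          have hL0 : (0:ℝ) < -Real.log q := by linarith
          have := mul_le_mul hq_lo hA hApos.le hq0.le
          nlinarith




noncomputable def Lf (x : ℝ) : ℝ := -Real.log (1 - stdNormalCDF x)

lemma hasDerivAt_Lf (x : ℝ) :
    HasDerivAt Lf ((Real.sqrt (2 * π))⁻¹ * g x / (1 - stdNormalCDF x)) x := by
  have h1 : HasDerivAt (fun x => 1 - stdNormalCDF x)
      (-((Real.sqrt (2 * π))⁻¹ * g x)) x := (hasDerivAt_Phi x).const_sub 1
  have h2 := (h1.log (ne_of_gt (q_pos x))).neg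
  exact h2.congr_deriv (by field_simp)

lemma Lf_pos {x : ℝ} (hq3 : 1 - stdNormalCDF x ≤ 1/3) : 1 ≤ Lf x := by
  unfold Lf
  have hq0 := q_pos x
  have := Real.log_le_log hq0 hq3
  have h13 : Real.log (1/3 : ℝ) = -Real.log 3 := by rw [one_div, Real.log_inv]
  nlinarith [log_three_ge]

lemma G_strictMonoOn {b₀ : ℝ} (hb₀ : 0 < b₀) (hq₀ : 1 - stdNormalCDF b₀ ≤ 1/3) :
    StrictMonoOn (fun x => x ^ 2 / Lf x) (Ici b₀) := by
  have hq3 : ∀ x ∈ Ici b₀, 1 - stdNormalCDF x ≤ 1/3 := by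
    intro x hx
    have := Phi_strictMono.monotone hx.out
    linarith
  have hderiv : ∀ x ∈ Ici b₀, HasDerivAt (fun x => x ^ 2 / Lf x)
      ((2 * x * Lf x - x ^ 2 * ((Real.sqrt (2 * π))⁻¹ * g x / (1 - stdNormalCDF x)))
        / (Lf x) ^ 2) x := by
    intro x hx
    have hL := Lf_pos (hq3 x hx)
    have h := (hasDerivAt_pow 2 x).div (hasDerivAt_Lf x) (by linarith)
    exact h.congr_deriv (by push_cast; ring)
  apply strictMonoOn_of_deriv_pos (convex_Ici b₀)
  · intro x hx
    exact ((hderiv x hx).continuousAt).continuousWithinAt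
  · intro x hx
    rw [interior_Ici] at hx
    have hxb : b₀ ≤ x := le_of_lt hx
    rw [(hderiv x hxb).deriv]
    have hL := Lf_pos (hq3 x hxb)
    have hq0 := q_pos x
    have hxpos : 0 < x := lt_trans hb₀ hx
    have hkey := key hxpos (hq3 x hxb)
    apply div_pos _ (by positivity)
    have h2 : x ^ 2 * ((Real.sqrt (2 * π))⁻¹ * g x / (1 - stdNormalCDF x)) < 2 * x * Lf x := by
      rw [mul_div_assoc', div_lt_iff₀ hq0]
      unfold Lf
      nlinarith [mul_lt_mul_of_pos_left hkey hxpos]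
    linarith

/-- For `n₀ ≥ 3` and `n > n₀`, `bₙ² > (b_{n₀}²/log n₀)·log n`,
i.e. the sequence `bₙ²/log n` is strictly increasing. -/
theorem bn_sq_div_log_strictMono (n₀ n : ℕ) (hn₀ : 3 ≤ n₀) (hn : n₀ < n)
    (b₀ bn : ℝ) (hb₀ : stdNormalCDF b₀ = 1 - 1 / (n₀ : ℝ))
    (hbn : stdNormalCDF bn = 1 - 1 / (n : ℝ)) :
    bn ^ 2 > (b₀ ^ 2 / Real.log n₀) * Real.log n := by
  have hn₀3 : (3:ℝ) ≤ (n₀:ℝ) := by exact_mod_cast hn₀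
  have hn₀pos : (0:ℝ) < (n₀:ℝ) := by linarith
  have hnn : (n₀:ℝ) < (n:ℝ) := by exact_mod_cast hn
  have hnpos : (0:ℝ) < (n:ℝ) := by linarith
  -- q values
  have hq₀ : 1 - stdNormalCDF b₀ = 1 / (n₀:ℝ) := by rw [hb₀]; ring
  have hqn : 1 - stdNormalCDF bn = 1 / (n:ℝ) := by rw [hbn]; ring
  have hq₀3 : 1 - stdNormalCDF b₀ ≤ 1/3 := by
    rw [hq₀]
    rw [div_le_div_iff₀ hn₀pos (by norm_num)]
    linarith
  -- b₀ > 0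
  have hb₀pos : 0 < b₀ := by
    have h1 : stdNormalCDF 0 < stdNormalCDF b₀ := by
      rw [Phi_zero, hb₀]
      have h13 : 1 / (n₀:ℝ) ≤ 1/3 := by rw [← hq₀]; exact hq₀3
      linarith
    exact Phi_strictMono.lt_iff_lt.mp h1
  -- bn > b₀
  have hbnb : b₀ < bn := by
    have h1 : stdNormalCDF b₀ < stdNormalCDF bn := by
      rw [hb₀, hbn]
      have : 1 / (n:ℝ) < 1 / (n₀:ℝ) := by
        rw [div_lt_div_iff₀ hnpos hn₀pos]
        linarith
      linarith
    exact Phi_strictMono.lt_iff_lt.mp h1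
  -- L values
  have hL₀ : Lf b₀ = Real.log n₀ := by
    unfold Lf; rw [hq₀, one_div, Real.log_inv]; ring
  have hLn : Lf bn = Real.log n := by
    unfold Lf; rw [hqn, one_div, Real.log_inv]; ring
  have hlog₀ : 0 < Real.log n₀ := by
    have := Real.log_le_log (by norm_num : (0:ℝ) < 3) hn₀3
    linarith [log_three_ge]
  have hlogn : 0 < Real.log n := by
    have := Real.log_le_log (by norm_num : (0:ℝ) < 3) (by linarith : (3:ℝ) ≤ (n:ℝ))
    linarith [log_three_ge]
  have hmono := G_strictMonoOn hb₀pos hq₀3 self_mem_Ici (show bn ∈ Ici b₀ from hbnb.le) hbnb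
  simp only [hL₀, hLn] at hmono
  -- hmono : b₀ ^ 2 / log n₀ < bn ^ 2 / log n
  rw [gt_iff_lt, ← lt_div_iff₀ hlogn]
  exact hmono
end

section
/- For every integer n₀ ≥ 3 and every integer n ≥ n₀, sup_{x ≥ 0} |Φⁿ(x/b_n + b_n) − Λ(x)| < C̄⁺(n₀)/log n, where C̄⁺(n₀) = ((√2 + 1)/e^{√2})·(log n₀)/b_{n₀}² + (log n₀)/(2(n₀ − 1)). -/
open Real

/-- The Gumbel distribution function. -/
noncomputable def gumbelCDF (x : ℝ) : ℝ := Real.exp (-Real.exp (-x))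

namespace AH

open MeasureTheory Set Filter


lemma integrable_gauss : Integrable (fun t : ℝ => Real.exp (-t ^ 2 / 2)) := by
  have h : (fun t : ℝ => Real.exp (-t ^ 2 / 2)) = fun t => Real.exp (-(1/2 : ℝ) * t ^ 2) := by
    funext t; ring_nf
  rw [h]; exact integrable_exp_neg_mul_sq (by norm_num)

lemma total_gauss : (∫ t : ℝ, Real.exp (-t ^ 2 / 2)) = Real.sqrt (2 * π) := by
  have h : (fun t : ℝ => Real.exp (-t ^ 2 / 2)) = fun t => Real.exp (-(1/2 : ℝ) * t ^ 2) := by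
    funext t; ring_nf
  rw [h, integral_gaussian]
  rw [show π / (1/2) = 2 * π by ring]

noncomputable def tail (b : ℝ) : ℝ := ∫ t in Set.Ioi b, Real.exp (-t ^ 2 / 2)

lemma sqrt2pi_pos : 0 < Real.sqrt (2 * π) := Real.sqrt_pos.mpr (by positivity)

lemma one_sub_cdf (x : ℝ) : 1 - stdNormalCDF x = (Real.sqrt (2 * π))⁻¹ * tail x := by
  have h := intervalIntegral.integral_Iic_add_Ioi (integrable_gauss.integrableOn (s := Iic x))
    (integrable_gauss.integrableOn (s := Ioi x))
  rw [total_gauss] at h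
  have h2 : (Real.sqrt (2 * π))⁻¹ * ((∫ t in Set.Iic x, Real.exp (-t ^ 2 / 2)) +
      ∫ t in Set.Ioi x, Real.exp (-t ^ 2 / 2)) = 1 := by
    rw [h]; exact inv_mul_cancel₀ sqrt2pi_pos.ne'
  rw [mul_add] at h2
  rw [stdNormalCDF, tail]
  linarith

lemma tail_pos (x : ℝ) : 0 < tail x := by
  rw [tail]
  apply (setIntegral_pos_iff_support_of_nonneg_ae _ _).mpr
  · have : (Function.support fun t : ℝ => Real.exp (-t ^ 2 / 2)) = Set.univ := by
      ext t; simp [Real.exp_ne_zero]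
    rw [this, Set.univ_inter]
    simp [Real.volume_Ioi]
  · filter_upwards with t using (Real.exp_pos _).le
  · exact integrable_gauss.integrableOn

lemma cdf_lt_one (x : ℝ) : stdNormalCDF x < 1 := by
  have := one_sub_cdf x
  nlinarith [tail_pos x, sqrt2pi_pos, inv_pos.mpr sqrt2pi_pos]

lemma cdf_pos (x : ℝ) : 0 < stdNormalCDF x := by
  rw [stdNormalCDF]
  apply mul_pos (inv_pos.mpr sqrt2pi_pos)
  apply (setIntegral_pos_iff_support_of_nonneg_ae _ _).mpr
  · have : (Function.support fun t : ℝ => Real.exp (-t ^ 2 / 2)) = Set.univ := by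
      ext t; simp [Real.exp_ne_zero]
    rw [this, Set.univ_inter]
    simp [Real.volume_Iic]
  · filter_upwards with t using (Real.exp_pos _).le
  · exact integrable_gauss.integrableOn

lemma hasDerivAt_cdf (x : ℝ) :
    HasDerivAt stdNormalCDF ((Real.sqrt (2 * π))⁻¹ * Real.exp (-x ^ 2 / 2)) x := by
  have key : ∀ y : ℝ, stdNormalCDF y =
      (Real.sqrt (2 * π))⁻¹ * ((∫ t in Set.Iic (0:ℝ), Real.exp (-t ^ 2 / 2)) +
        ∫ t in (0:ℝ)..y, Real.exp (-t ^ 2 / 2)) := by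
    intro y
    rw [stdNormalCDF, ← intervalIntegral.integral_Iic_sub_Iic (integrable_gauss.integrableOn)
      (integrable_gauss.integrableOn)]
    ring
  have hd : HasDerivAt (fun y => ∫ t in (0:ℝ)..y, Real.exp (-t ^ 2 / 2))
      (Real.exp (-x ^ 2 / 2)) x := by
    exact intervalIntegral.integral_hasDerivAt_right
      (integrable_gauss.intervalIntegrable)
      (Continuous.stronglyMeasurableAtFilter (by continuity) _ _)
      (Continuous.continuousAt (by continuity))
  have := ((hd.const_add (∫ t in Set.Iic (0:ℝ), Real.exp (-t ^ 2 / 2))).const_mul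
    ((Real.sqrt (2 * π))⁻¹))
  refine HasDerivAt.congr_of_eventuallyEq ?_ (Filter.Eventually.of_forall key)
  convert this using 1

lemma cdf_strictMono : StrictMono stdNormalCDF := by
  apply strictMono_of_deriv_pos
  intro x
  rw [(hasDerivAt_cdf x).deriv]
  positivity




lemma hasDerivAt_tail (x : ℝ) : HasDerivAt tail (-Real.exp (-x ^ 2 / 2)) x := by
  have heq : ∀ y, tail y = Real.sqrt (2 * π) * (1 - stdNormalCDF y) := by
    intro y
    rw [one_sub_cdf y, ← mul_assoc, mul_inv_cancel₀ sqrt2pi_pos.ne', one_mul]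
  have : HasDerivAt (fun y => Real.sqrt (2 * π) * (1 - stdNormalCDF y))
      (-Real.exp (-x ^ 2 / 2)) x := by
    have h1 := ((hasDerivAt_cdf x).const_sub 1).const_mul (Real.sqrt (2 * π))
    refine h1.congr_deriv ?_
    rw [mul_neg, ← mul_assoc, mul_inv_cancel₀ sqrt2pi_pos.ne', one_mul]
  exact this.congr_of_eventuallyEq (Eventually.of_forall heq)

lemma tail_zero : tail 0 = Real.sqrt (2 * π) / 2 := by
  have h : (fun t : ℝ => Real.exp (-t ^ 2 / 2)) = fun t => Real.exp (-(1/2 : ℝ) * t ^ 2) := by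
    funext t; ring_nf
  rw [tail, h, integral_gaussian_Ioi, show π / (1/2 : ℝ) = 2 * π by ring]

lemma integral_t_gauss {b : ℝ} (hb : 0 < b) :
    (∫ t in Set.Ioi b, t * Real.exp (-t ^ 2 / 2)) = Real.exp (-b ^ 2 / 2) := by
  have hderiv : ∀ x ∈ Set.Ici b, HasDerivAt (fun t : ℝ => -Real.exp (-t ^ 2 / 2))
      (x * Real.exp (-x ^ 2 / 2)) x := by
    intro x _
    have h1 : HasDerivAt (fun t : ℝ => -t ^ 2 / 2) (-x) x := by
      have := ((hasDerivAt_pow 2 x).neg).div_const 2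
      exact this.congr_deriv (by ring)
    have := (h1.exp).neg
    exact this.congr_deriv (by ring)
  have hpos : ∀ x ∈ Set.Ioi b, 0 ≤ x * Real.exp (-x ^ 2 / 2) := fun x hx =>
    mul_nonneg (le_of_lt (lt_trans hb hx)) (Real.exp_pos _).le
  have hlim : Tendsto (fun t : ℝ => -Real.exp (-t ^ 2 / 2)) atTop (nhds 0) := by
    rw [show (0:ℝ) = -0 by ring]
    apply Tendsto.neg
    apply Real.tendsto_exp_atBot.comp
    have h2 : Tendsto (fun t : ℝ => t ^ 2) atTop atTop := tendsto_pow_atTop two_ne_zero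
    exact (tendsto_neg_atTop_atBot.comp h2).atBot_div_const (by norm_num)
  have := integral_Ioi_of_hasDerivAt_of_nonneg' hderiv hpos hlim
  rw [this]; ring

lemma integrableOn_t_gauss {b : ℝ} (hb : 0 < b) :
    IntegrableOn (fun t : ℝ => t * Real.exp (-t ^ 2 / 2)) (Set.Ioi b) := by
  have hderiv : ∀ x ∈ Set.Ici b, HasDerivAt (fun t : ℝ => -Real.exp (-t ^ 2 / 2))
      (x * Real.exp (-x ^ 2 / 2)) x := by
    intro x _
    have h1 : HasDerivAt (fun t : ℝ => -t ^ 2 / 2) (-x) x := by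
      have := ((hasDerivAt_pow 2 x).neg).div_const 2
      exact this.congr_deriv (by ring)
    have := (h1.exp).neg
    exact this.congr_deriv (by ring)
  have hpos : ∀ x ∈ Set.Ioi b, 0 ≤ x * Real.exp (-x ^ 2 / 2) := fun x hx =>
    mul_nonneg (le_of_lt (lt_trans hb hx)) (Real.exp_pos _).le
  have hlim : Tendsto (fun t : ℝ => -Real.exp (-t ^ 2 / 2)) atTop (nhds 0) := by
    rw [show (0:ℝ) = -0 by ring]
    apply Tendsto.neg
    apply Real.tendsto_exp_atBot.comp
    have h2 : Tendsto (fun t : ℝ => t ^ 2) atTop atTop := tendsto_pow_atTop two_ne_zero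
    exact (tendsto_neg_atTop_atBot.comp h2).atBot_div_const (by norm_num)
  exact integrableOn_Ioi_deriv_of_nonneg' hderiv hpos hlim

lemma mills_upper {b : ℝ} (hb : 0 < b) : tail b ≤ Real.exp (-b ^ 2 / 2) / b := by
  have h1 : tail b ≤ ∫ t in Set.Ioi b, (t / b) * Real.exp (-t ^ 2 / 2) := by
    rw [tail]
    apply setIntegral_mono_on integrable_gauss.integrableOn
    · have h3 := (integrableOn_t_gauss hb).div_const b
      have heq : (fun t : ℝ => (t / b) * Real.exp (-t ^ 2 / 2))
          = fun t => (t * Real.exp (-t ^ 2 / 2)) / b := by funext t; ring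
      rw [heq]; exact h3
    · exact measurableSet_Ioi
    · intro t ht
      have h2 : 1 ≤ t / b := (one_le_div hb).mpr (le_of_lt ht)
      nlinarith [Real.exp_pos (-t ^ 2 / 2)]
  have h2 : (∫ t in Set.Ioi b, (t / b) * Real.exp (-t ^ 2 / 2))
      = (∫ t in Set.Ioi b, t * Real.exp (-t ^ 2 / 2)) / b := by
    rw [← integral_div]
    exact setIntegral_congr_fun measurableSet_Ioi (fun t _ => by ring)
  rw [h2, integral_t_gauss hb] at h1
  exact h1

lemma tail_le_sharp {b : ℝ} (hb : 0 ≤ b) :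
    tail b ≤ Real.sqrt (2 * π) * Real.exp (-(1 + b ^ 2) / 2) := by
  set C : ℝ := Real.sqrt (2 * π) * Real.exp (-(1:ℝ)/2) with hC
  have hCpos : 0 < C := by positivity
  have key : ∀ y : ℝ, Real.exp (-(1 + y ^ 2) / 2) = Real.exp (-(1:ℝ)/2) * Real.exp (-y^2/2) := by
    intro y; rw [← Real.exp_add]; ring_nf
  rcases le_or_gt (1 / C) b with hcase | hcase
  · -- large b : Mills
    have hbpos : 0 < b := lt_of_lt_of_le (by positivity) hcase
    calc tail b ≤ Real.exp (-b ^ 2 / 2) / b := mills_upper hbpos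
    _ ≤ C * Real.exp (-b^2/2) := by
        rw [div_le_iff₀ hbpos]
        rw [mul_comm C, mul_assoc]
        have : 1 ≤ C * b := (div_le_iff₀' hCpos).mp hcase
        nlinarith [Real.exp_pos (-b^2/2)]
    _ = Real.sqrt (2 * π) * Real.exp (-(1 + b ^ 2) / 2) := by rw [key]; ring
  · -- small b : monotonicity
    set h : ℝ → ℝ := fun y => C * Real.exp (-y ^ 2 / 2) - tail y with hh
    have hd : ∀ y : ℝ, HasDerivAt h (Real.exp (-y^2/2) * (1 - C * y)) y := by
      intro y
      have h1 : HasDerivAt (fun t : ℝ => -t ^ 2 / 2) (-y) y := by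
        have := ((hasDerivAt_pow 2 y).neg).div_const 2
        exact this.congr_deriv (by ring)
      have h2 := (h1.exp).const_mul C
      have := h2.sub (hasDerivAt_tail y)
      exact this.congr_deriv (by ring)
    have hmono : MonotoneOn h (Set.Icc 0 (1 / C)) := by
      apply monotoneOn_of_deriv_nonneg (convex_Icc _ _)
      · exact Continuous.continuousOn (by
          have : ∀ y, h y = C * Real.exp (-y ^ 2 / 2) - tail y := fun y => rfl
          exact (continuous_iff_continuousAt.mpr (fun y => ((hd y).continuousAt))))
      · intro y _
        exact (hd y).differentiableAt.differentiableWithinAt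
      · intro y hy
        rw [(hd y).deriv]
        rw [interior_Icc] at hy
        have : C * y ≤ 1 := by
          rw [← le_div_iff₀' hCpos]
          exact hy.2.le
        have := Real.exp_pos (-y^2/2)
        nlinarith
    have h0 : 0 ≤ h 0 := by
      have : tail 0 = Real.sqrt (2 * π) / 2 := tail_zero
      rw [hh]
      simp only [ne_eq, OfNat.ofNat_ne_zero, not_false_eq_true, zero_pow, neg_zero, zero_div,
        Real.exp_zero, mul_one, this]
      have he : (1:ℝ)/2 ≤ Real.exp (-(1:ℝ)/2) := by
        have hsq : Real.exp ((1:ℝ)/2) * Real.exp ((1:ℝ)/2) = Real.exp 1 := by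
          rw [← Real.exp_add]; norm_num
        have h2 : Real.exp ((1:ℝ)/2) < 2 := by
          nlinarith [Real.exp_one_lt_d9, Real.exp_pos ((1:ℝ)/2)]
        have h3 : ((2:ℝ))⁻¹ ≤ (Real.exp ((1:ℝ)/2))⁻¹ :=
          inv_anti₀ (by positivity) h2.le
        rw [show (-1:ℝ)/2 = -((1:ℝ)/2) by ring, Real.exp_neg]
        linarith
      nlinarith [sqrt2pi_pos]
    have hb' : h 0 ≤ h b := hmono (by constructor <;> norm_num [hCpos.le]) ⟨hb, hcase.le⟩ hb
    have : 0 ≤ h b := le_trans h0 hb'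
    rw [hh] at this
    simp only at this
    rw [key]
    calc tail b ≤ C * Real.exp (-b^2/2) := by linarith
    _ = Real.sqrt (2 * π) * (Real.exp (-(1:ℝ)/2) * Real.exp (-b^2/2)) := by rw [hC]; ring

noncomputable def uu (b : ℝ) : ℝ := 1 - stdNormalCDF b
noncomputable def HH (b : ℝ) : ℝ := -Real.log (uu b)
noncomputable def phi (b : ℝ) : ℝ := (Real.sqrt (2 * π))⁻¹ * Real.exp (-b ^ 2 / 2)

lemma uu_pos (b : ℝ) : 0 < uu b := by have := cdf_lt_one b; rw [uu]; linarith
lemma uu_lt_one (b : ℝ) : uu b < 1 := by have := cdf_pos b; rw [uu]; linarith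
lemma HH_pos (b : ℝ) : 0 < HH b := by
  rw [HH, neg_pos]
  exact Real.log_neg (uu_pos b) (uu_lt_one b)
lemma phi_pos (b : ℝ) : 0 < phi b := by rw [phi]; positivity

lemma hasDerivAt_uu (b : ℝ) : HasDerivAt uu (-phi b) b := by
  have := (hasDerivAt_cdf b).const_sub 1
  exact this

lemma hasDerivAt_HH (b : ℝ) : HasDerivAt HH (phi b / uu b) b := by
  have h1 := (Real.hasDerivAt_log (uu_pos b).ne').comp b (hasDerivAt_uu b)
  have := h1.neg
  refine this.congr_deriv ?_
  field_simp

lemma uu_le_sharp {b : ℝ} (hb : 0 ≤ b) : uu b ≤ Real.exp (-(1 + b ^ 2) / 2) := by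
  have h := tail_le_sharp hb
  have h2 := one_sub_cdf b
  rw [uu, h2]
  calc (Real.sqrt (2 * π))⁻¹ * tail b
      ≤ (Real.sqrt (2 * π))⁻¹ * (Real.sqrt (2 * π) * Real.exp (-(1 + b ^ 2) / 2)) := by
        apply mul_le_mul_of_nonneg_left h (by positivity)
  _ = Real.exp (-(1 + b ^ 2) / 2) := by
        rw [← mul_assoc, inv_mul_cancel₀ sqrt2pi_pos.ne', one_mul]

lemma two_HH_ge {b : ℝ} (hb : 0 ≤ b) : 1 + b ^ 2 ≤ 2 * HH b := by
  have h := uu_le_sharp hb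
  have h2 : Real.log (uu b) ≤ -(1 + b ^ 2) / 2 := by
    calc Real.log (uu b) ≤ Real.log (Real.exp (-(1 + b ^ 2) / 2)) :=
      Real.log_le_log (uu_pos b) h
    _ = -(1 + b ^ 2) / 2 := Real.log_exp _
  rw [HH]; linarith

noncomputable def gg (b : ℝ) : ℝ := 2 * uu b * HH b - b * phi b

lemma hasDerivAt_gg (b : ℝ) :
    HasDerivAt gg (phi b * (b ^ 2 + 1 - 2 * HH b)) b := by
  have hphi : HasDerivAt phi (-b * phi b) b := by
    have h1 : HasDerivAt (fun t : ℝ => -t ^ 2 / 2) (-b) b := by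
      have := ((hasDerivAt_pow 2 b).neg).div_const 2
      exact this.congr_deriv (by ring)
    have h5 := (h1.exp).const_mul ((Real.sqrt (2 * π))⁻¹)
    have h6 : HasDerivAt phi ((Real.sqrt (2 * π))⁻¹ * (Real.exp (-b ^ 2 / 2) * -b)) b := h5
    refine h6.congr_deriv ?_
    rw [phi]; ring
  have h1 := ((hasDerivAt_uu b).const_mul 2).mul (hasDerivAt_HH b)
  have h2 := (HasDerivAt.mul (hasDerivAt_id b) hphi)
  have := h1.sub h2
  refine this.congr_deriv ?_
  have hu := (uu_pos b).ne'
  field_simp [gg]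
  simp only [id_eq]; ring

lemma tendsto_uu : Tendsto uu atTop (nhds 0) := by
  have hb : ∀ b : ℝ, 1 ≤ b → uu b ≤ Real.exp (-(1+b^2)/2) := fun b h => uu_le_sharp (by linarith)
  apply squeeze_zero' (Eventually.of_forall (fun b => (uu_pos b).le))
    (eventually_atTop.mpr ⟨1, hb⟩)
  apply Real.tendsto_exp_atBot.comp
  have h2 : Tendsto (fun t : ℝ => t ^ 2) atTop atTop := tendsto_pow_atTop two_ne_zero
  have h3 : Tendsto (fun t : ℝ => 1 + t ^ 2) atTop atTop := tendsto_atTop_add_const_left _ _ h2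
  exact (tendsto_neg_atTop_atBot.comp h3).atBot_div_const (by norm_num)

lemma tendsto_gg : Tendsto gg atTop (nhds 0) := by
  have huH : Tendsto (fun b => 2 * uu b * HH b) atTop (nhds 0) := by
    apply squeeze_zero' (g := fun b => 4 * Real.sqrt (uu b))
    · filter_upwards [eventually_ge_atTop (0:ℝ)] with b hb
      have := uu_pos b
      have := HH_pos b
      positivity
    · filter_upwards [eventually_ge_atTop (0:ℝ)] with b hb
      -- 2 u H ≤ 4 √u  since H = -log u = 2 log (1/√u) ≤ 2 (1/√u - 1) ≤ 2/√u
      have hu := uu_pos b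
      have hs : 0 < Real.sqrt (uu b) := Real.sqrt_pos.mpr hu
      have hlog : HH b ≤ 2 / Real.sqrt (uu b) := by
        rw [HH]
        have h1 : Real.log (uu b) = 2 * Real.log (Real.sqrt (uu b)) := by
          have := Real.log_sqrt hu.le
          linarith
        have h2 : Real.log (Real.sqrt (uu b)) ≥ 1 - 1 / Real.sqrt (uu b) := by
          have := Real.add_one_le_exp (Real.log (1 / Real.sqrt (uu b)))
          rw [Real.exp_log (by positivity), Real.log_div one_ne_zero hs.ne'] at this
          simp only [Real.log_one] at this
          nlinarith
        rw [h1]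
        have : Real.log (Real.sqrt (uu b)) ≥ -(1 / Real.sqrt (uu b)) := by linarith
        calc -(2 * Real.log (Real.sqrt (uu b))) ≤ 2 * (1 / Real.sqrt (uu b)) := by linarith
        _ = 2 / Real.sqrt (uu b) := by ring
      calc 2 * uu b * HH b ≤ 2 * uu b * (2 / Real.sqrt (uu b)) := by
            apply mul_le_mul_of_nonneg_left hlog (by positivity)
      _ = 4 * (uu b / Real.sqrt (uu b)) := by ring
      _ = 4 * Real.sqrt (uu b) := by rw [Real.div_sqrt]
    · have : Tendsto (fun b => Real.sqrt (uu b)) atTop (nhds 0) := by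
        have := (Real.continuous_sqrt.tendsto 0).comp tendsto_uu
        simpa [Function.comp_def] using this
      simpa using this.const_mul (4:ℝ)
  have hbphi : Tendsto (fun b => b * phi b) atTop (nhds 0) := by
    apply squeeze_zero' (g := fun b => (Real.sqrt (2 * π))⁻¹ * (2 / b))
    · filter_upwards [eventually_ge_atTop (1:ℝ)] with b hb
      have := Real.exp_pos (-b^2/2)
      have : 0 < phi b := phi_pos b
      positivity
    · filter_upwards [eventually_ge_atTop (1:ℝ)] with b hb
      have hbpos : (0:ℝ) < b := by linarith
      have hexp : Real.exp (-b^2/2) ≤ 2 / b ^ 2 := by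
        have h1 : b ^ 2 / 2 ≤ Real.exp (b ^ 2 / 2) := by
          have := Real.add_one_le_exp (b ^ 2 / 2)
          linarith
        rw [show -b^2/2 = -(b^2/2) by ring, Real.exp_neg]
        calc (Real.exp (b^2/2))⁻¹ ≤ (b^2/2)⁻¹ := inv_anti₀ (by positivity) h1
        _ = 2 / b ^ 2 := by rw [inv_div]
      calc b * phi b = (Real.sqrt (2 * π))⁻¹ * (b * Real.exp (-b^2/2)) := by rw [phi]; ring
      _ ≤ (Real.sqrt (2 * π))⁻¹ * (b * (2 / b ^ 2)) := by
          apply mul_le_mul_of_nonneg_left _ (by positivity)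
          exact mul_le_mul_of_nonneg_left hexp hbpos.le
      _ = (Real.sqrt (2 * π))⁻¹ * (2 / b) := by
          congr 1
          field_simp
    · have h1 : Tendsto (fun b : ℝ => 2 / b) atTop (nhds 0) :=
        tendsto_const_nhds.div_atTop tendsto_id
      simpa using h1.const_mul ((Real.sqrt (2 * π))⁻¹)
  have := huH.sub hbphi
  simp only [sub_zero] at this; exact this

lemma gg_antitoneOn : AntitoneOn gg (Set.Ici 0) := by
  apply antitoneOn_of_deriv_nonpos (convex_Ici 0)
  · exact Continuous.continuousOn
      (continuous_iff_continuousAt.mpr (fun y => (hasDerivAt_gg y).continuousAt))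
  · intro y _
    exact (hasDerivAt_gg y).differentiableAt.differentiableWithinAt
  · intro y hy
    rw [interior_Ici] at hy
    rw [(hasDerivAt_gg y).deriv]
    have h1 := two_HH_ge (le_of_lt hy)
    have h2 := (phi_pos y).le
    nlinarith

lemma gg_nonneg {b : ℝ} (hb : 0 ≤ b) : 0 ≤ gg b := by
  apply le_of_tendsto (f := gg) tendsto_gg
  filter_upwards [eventually_ge_atTop b] with c hc
  exact gg_antitoneOn hb (le_trans hb hc) hc

lemma ratio_mono {a b : ℝ} (ha : 0 ≤ a) (hab : a ≤ b) :
    a ^ 2 / HH a ≤ b ^ 2 / HH b := by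
  have key : MonotoneOn (fun b => b ^ 2 / HH b) (Set.Ici 0) := by
    have hd : ∀ y : ℝ, HasDerivAt (fun b => b ^ 2 / HH b)
        ((2 * y * HH y - y ^ 2 * (phi y / uu y)) / (HH y) ^ 2) y := by
      intro y
      exact ((hasDerivAt_pow 2 y).div (hasDerivAt_HH y) (HH_pos y).ne').congr_deriv
        (by push_cast; ring)
    apply monotoneOn_of_deriv_nonneg (convex_Ici 0)
    · exact Continuous.continuousOn
        (continuous_iff_continuousAt.mpr (fun y => (hd y).continuousAt))
    · intro y _
      exact (hd y).differentiableAt.differentiableWithinAt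
    · intro y hy
      rw [interior_Ici] at hy
      rw [(hd y).deriv]
      apply div_nonneg _ (sq_nonneg _)
      have hgg := gg_nonneg (le_of_lt hy)
      rw [gg] at hgg
      have hu := uu_pos y
      have hH := (HH_pos y).le
      -- 2 y H - y^2 (phi/u) = (y/u) * (2 u H - y phi)  ≥ 0
      have : 2 * y * HH y - y ^ 2 * (phi y / uu y)
          = (y / uu y) * (2 * uu y * HH y - y * phi y) := by
        field_simp
      rw [this]
      apply mul_nonneg (div_nonneg (le_of_lt hy) hu.le) hgg
  exact key ha (le_trans ha hab) hab



noncomputable def W (b y : ℝ) : ℝ := Real.exp (-y - y ^ 2 / (2 * b ^ 2))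

lemma W_pos (b y : ℝ) : 0 < W b y := Real.exp_pos _

lemma continuous_W (b : ℝ) : Continuous (W b) := by
  apply Real.continuous_exp.comp
  continuity

lemma W_le_exp (b y : ℝ) : W b y ≤ Real.exp (-y) := by
  apply Real.exp_le_exp.mpr
  have : 0 ≤ y ^ 2 / (2 * b ^ 2) := by positivity
  linarith

lemma integrableOn_exp_neg : IntegrableOn (fun y : ℝ => Real.exp (-y)) (Ioi (0:ℝ)) := by
  have := exp_neg_integrableOn_Ioi (0:ℝ) (one_pos)
  simpa using this

lemma integrableOn_W (b : ℝ) {x : ℝ} (hx : 0 ≤ x) : IntegrableOn (W b) (Ioi x) := by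
  apply Integrable.mono' (g := fun y => Real.exp (-y))
  · exact (integrableOn_exp_neg).mono_set (Ioi_subset_Ioi hx)
  · exact ((continuous_W b).aestronglyMeasurable).restrict
  · filter_upwards with y
    rw [Real.norm_eq_abs, abs_of_pos (W_pos b y)]
    exact W_le_exp b y

lemma integrableOn_mul_exp_neg : IntegrableOn (fun y : ℝ => y * Real.exp (-y)) (Ioi (0:ℝ)) := by
  have hderiv : ∀ y ∈ Set.Ici (0:ℝ), HasDerivAt (fun t : ℝ => -(t + 1) * Real.exp (-t))
      (y * Real.exp (-y)) y := by
    intro y _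
    have h1 : HasDerivAt (fun t : ℝ => -(t + 1)) (-1) y := by
      exact ((hasDerivAt_id y).add_const 1).neg
    have h2 : HasDerivAt (fun t : ℝ => Real.exp (-t)) (-Real.exp (-y)) y := by
      simpa using ((hasDerivAt_id y).neg).exp
    have := h1.mul h2
    exact this.congr_deriv (by ring)
  have hpos : ∀ y ∈ Set.Ioi (0:ℝ), 0 ≤ y * Real.exp (-y) := fun y hy =>
    mul_nonneg (le_of_lt hy) (Real.exp_pos _).le
  have hlim : Tendsto (fun t : ℝ => -(t + 1) * Real.exp (-t)) atTop (nhds 0) := by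
    have h1 := Real.tendsto_pow_mul_exp_neg_atTop_nhds_zero 1
    have h2 := Real.tendsto_exp_neg_atTop_nhds_zero
    have h3 := (h1.add h2).neg
    simp only [pow_one, neg_zero, add_zero] at h3
    convert h3 using 2 with t
    ring
  exact integrableOn_Ioi_deriv_of_nonneg' hderiv hpos hlim

lemma exp_neg_decay_lemma : ∀ y ∈ Set.Ici (0:ℝ), HasDerivAt (fun t : ℝ => -(t + 1) * Real.exp (-t))
    (y * Real.exp (-y)) y := by
  intro y _
  have h1 : HasDerivAt (fun t : ℝ => -(t + 1)) (-1) y := by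
    exact ((hasDerivAt_id y).add_const 1).neg
  have h2 : HasDerivAt (fun t : ℝ => Real.exp (-t)) (-Real.exp (-y)) y := by
    simpa using ((hasDerivAt_id y).neg).exp
  have := h1.mul h2
  exact this.congr_deriv (by ring)

lemma integral_mul_exp_neg : (∫ y in Ioi (0:ℝ), y * Real.exp (-y)) = 1 := by
  have hpos : ∀ y ∈ Set.Ioi (0:ℝ), 0 ≤ y * Real.exp (-y) := fun y hy =>
    mul_nonneg (le_of_lt hy) (Real.exp_pos _).le
  have hlim : Tendsto (fun t : ℝ => -(t + 1) * Real.exp (-t)) atTop (nhds 0) := by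
    have h1 := Real.tendsto_pow_mul_exp_neg_atTop_nhds_zero 1
    have h2 := Real.tendsto_exp_neg_atTop_nhds_zero
    have h3 := (h1.add h2).neg
    simp only [pow_one, neg_zero, add_zero] at h3
    convert h3 using 2 with t
    ring
  rw [integral_Ioi_of_hasDerivAt_of_nonneg' exp_neg_decay_lemma hpos hlim]
  norm_num

lemma integrableOn_mul_W (b : ℝ) : IntegrableOn (fun y : ℝ => y * W b y) (Ioi (0:ℝ)) := by
  apply Integrable.mono' (g := fun y => y * Real.exp (-y)) integrableOn_mul_exp_neg
  · exact (continuous_id.mul (continuous_W b)).aestronglyMeasurable.restrict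
  · rw [ae_restrict_iff' measurableSet_Ioi]
    filter_upwards with y hy
    rw [Real.norm_eq_abs, abs_of_pos (mul_pos hy (W_pos b y))]
    exact mul_le_mul_of_nonneg_left (W_le_exp b y) (le_of_lt hy)

lemma integral_yW_le (b : ℝ) (hb : 0 < b) :
    (∫ y in Ioi (0:ℝ), y * W b y) ≤ ∫ y in Ioi (0:ℝ), W b y := by
  set w : ℝ → ℝ := fun y => Real.exp (-y ^ 2 / (2 * b ^ 2)) with hw
  have hWw : ∀ y, W b y = Real.exp (-y) * w y := by
    intro y; rw [W, hw, ← Real.exp_add]; ring_nf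
  have horder : ∀ s t : ℝ, s ^ 2 ≤ t ^ 2 → w t ≤ w s := by
    intro s t h
    apply Real.exp_le_exp.mpr
    have hb2 : (0:ℝ) < 2 * b ^ 2 := by positivity
    exact (div_le_div_iff_of_pos_right hb2).mpr (by linarith)
  have hkey : (∫ y in Ioi (0:ℝ), (y - 1) * Real.exp (-y) * (w y - w 1)) ≤ 0 := by
    apply integral_nonpos_of_ae
    rw [EventuallyLE, ae_restrict_iff' measurableSet_Ioi]
    filter_upwards with y hy
    simp only [Pi.zero_apply]
    have hy0 : 0 < y := mem_Ioi.mp hy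
    rcases le_total y 1 with h | h
    · have hww : w 1 ≤ w y := horder y 1 (by nlinarith)
      have h1 : y - 1 ≤ 0 := by linarith
      have h2 := (Real.exp_pos (-y)).le
      exact mul_nonpos_of_nonpos_of_nonneg
        (mul_nonpos_of_nonpos_of_nonneg h1 h2) (sub_nonneg.mpr hww)
    · have hww : w y ≤ w 1 := horder 1 y (by nlinarith)
      have h1 : 0 ≤ y - 1 := by linarith
      have h2 := (Real.exp_pos (-y)).le
      exact mul_nonpos_of_nonneg_of_nonpos (mul_nonneg h1 h2) (sub_nonpos.mpr hww)
  have hexpand : (fun y : ℝ => (y - 1) * Real.exp (-y) * (w y - w 1))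
      = fun y => ((y * W b y - W b y) - w 1 * (y * Real.exp (-y))) + w 1 * Real.exp (-y) := by
    funext y
    rw [hWw y]
    ring
  rw [hexpand] at hkey
  have i1 : IntegrableOn (fun y : ℝ => y * W b y) (Ioi (0:ℝ)) := integrableOn_mul_W b
  have i2 : IntegrableOn (W b) (Ioi (0:ℝ)) := integrableOn_W b le_rfl
  have i3 : IntegrableOn (fun y : ℝ => w 1 * (y * Real.exp (-y))) (Ioi (0:ℝ)) :=
    integrableOn_mul_exp_neg.const_mul _
  have i4 : IntegrableOn (fun y : ℝ => w 1 * Real.exp (-y)) (Ioi (0:ℝ)) :=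
    integrableOn_exp_neg.const_mul _
  have hsum : (∫ y in Ioi (0:ℝ), (((y * W b y - W b y) - w 1 * (y * Real.exp (-y)))
        + w 1 * Real.exp (-y)))
      = (((∫ y in Ioi (0:ℝ), y * W b y) - ∫ y in Ioi (0:ℝ), W b y)
        - w 1 * ∫ y in Ioi (0:ℝ), y * Real.exp (-y)) + w 1 * ∫ y in Ioi (0:ℝ), Real.exp (-y) := by
    have e4 := integral_add ((i1.sub i2).sub i3) i4
    have e3 := integral_sub (i1.sub i2) i3
    have e2 := integral_sub i1 i2
    simp only [Pi.sub_apply] at e4 e3 e2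
    rw [e4, e3, e2, MeasureTheory.integral_const_mul, MeasureTheory.integral_const_mul]
  rw [hsum, integral_mul_exp_neg, integral_exp_neg_Ioi_zero] at hkey
  linarith

lemma integral_W_shift (b x : ℝ) :
    (∫ y in Ioi x, W b y) = ∫ y in Ioi (0:ℝ), W b (y + x) := by
  have := (measurePreserving_add_right volume x).setIntegral_preimage_emb
    (measurableEmbedding_addRight x) (W b) (Ioi x)
  simp only [preimage_add_const_Ioi] at this
  rw [← this]
  norm_num

lemma integrableOn_W_shift (b x : ℝ) (hx : 0 ≤ x) :
    IntegrableOn (fun y : ℝ => W b (y + x)) (Ioi (0:ℝ)) := by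
  apply Integrable.mono' (g := fun y => Real.exp (-y)) integrableOn_exp_neg
  · exact ((continuous_W b).comp (continuous_id.add continuous_const)).aestronglyMeasurable.restrict
  · rw [ae_restrict_iff' measurableSet_Ioi]
    filter_upwards with y hy
    rw [Real.norm_eq_abs, abs_of_pos (W_pos b _)]
    calc W b (y + x) ≤ Real.exp (-(y + x)) := W_le_exp b _
    _ ≤ Real.exp (-y) := Real.exp_le_exp.mpr (by linarith)

lemma W_pointwise_bounds (b : ℝ) (hb : 0 < b) {x y : ℝ} (hx : 0 ≤ x) (hy : 0 ≤ y) :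
    W b (y + x) ≤ Real.exp (-x) * W b y ∧
    Real.exp (-x) * W b y - W b (y + x)
      ≤ Real.exp (-x) * ((x ^ 2 / (2 * b ^ 2)) * W b y + (x / b ^ 2) * (y * W b y)) := by
  have hA : W b (y + x) = Real.exp (-x) * W b y *
      Real.exp (-((x ^ 2 + 2 * x * y) / (2 * b ^ 2))) := by
    rw [W, W, ← Real.exp_add, ← Real.exp_add]
    congr 1
    field_simp
    ring
  set d : ℝ := (x ^ 2 + 2 * x * y) / (2 * b ^ 2) with hd
  have hd0 : 0 ≤ d := by positivity
  have he1 : 1 - d ≤ Real.exp (-d) := by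
    have := Real.add_one_le_exp (-d)
    linarith
  have he2 : Real.exp (-d) ≤ 1 := by
    rw [← Real.exp_zero]
    exact Real.exp_le_exp.mpr (by linarith)
  have hW := (W_pos b y).le
  have hex := (Real.exp_pos (-x)).le
  constructor
  · rw [hA]
    nlinarith [mul_nonneg hex hW]
  · rw [hA]
    have : Real.exp (-x) * W b y - Real.exp (-x) * W b y * Real.exp (-d)
        ≤ Real.exp (-x) * W b y * d := by
      nlinarith [mul_nonneg hex hW]
    calc Real.exp (-x) * W b y - Real.exp (-x) * W b y * Real.exp (-d)
        ≤ Real.exp (-x) * W b y * d := this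
    _ = Real.exp (-x) * ((x ^ 2 / (2 * b ^ 2)) * W b y + (x / b ^ 2) * (y * W b y)) := by
        rw [hd]; field_simp

lemma integral_W_nonneg (b x : ℝ) : 0 ≤ ∫ y in Ioi x, W b y :=
  setIntegral_nonneg measurableSet_Ioi (fun y _ => (W_pos b y).le)

lemma W_integral_bounds (b : ℝ) (hb : 0 < b) {x : ℝ} (hx : 0 ≤ x) :
    (∫ y in Ioi x, W b y) ≤ Real.exp (-x) * (∫ y in Ioi (0:ℝ), W b y) ∧
    Real.exp (-x) * (∫ y in Ioi (0:ℝ), W b y) - (∫ y in Ioi x, W b y)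
      ≤ (x ^ 2 + 2 * x) / (2 * b ^ 2) * (Real.exp (-x) * ∫ y in Ioi (0:ℝ), W b y) := by
  have hI0 : 0 ≤ ∫ y in Ioi (0:ℝ), W b y := integral_W_nonneg b 0
  have hJ := integral_yW_le b hb
  have hJ0 : 0 ≤ ∫ y in Ioi (0:ℝ), y * W b y :=
    setIntegral_nonneg measurableSet_Ioi (fun y hy => mul_nonneg (le_of_lt hy) (W_pos b y).le)
  have iW : IntegrableOn (W b) (Ioi (0:ℝ)) := integrableOn_W b le_rfl
  have icW : IntegrableOn (fun y : ℝ => Real.exp (-x) * W b y) (Ioi (0:ℝ)) := iW.const_mul _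
  have ish : IntegrableOn (fun y : ℝ => W b (y + x)) (Ioi (0:ℝ)) := integrableOn_W_shift b x hx
  rw [integral_W_shift b x]
  constructor
  · have h1 : (∫ y in Ioi (0:ℝ), W b (y + x)) ≤ ∫ y in Ioi (0:ℝ), Real.exp (-x) * W b y := by
      apply setIntegral_mono_on ish icW measurableSet_Ioi
      intro y hy
      exact (W_pointwise_bounds b hb hx (le_of_lt hy)).1
    rw [MeasureTheory.integral_const_mul] at h1
    exact h1
  · have hsub := integral_sub icW ish
    have h2 : (∫ y in Ioi (0:ℝ), (Real.exp (-x) * W b y - W b (y + x)))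
        ≤ ∫ y in Ioi (0:ℝ),
            Real.exp (-x) * ((x ^ 2 / (2 * b ^ 2)) * W b y + (x / b ^ 2) * (y * W b y)) := by
      apply setIntegral_mono_on (icW.sub ish) _ measurableSet_Ioi
      · intro y hy
        exact (W_pointwise_bounds b hb hx (le_of_lt hy)).2
      · exact ((iW.const_mul _).add ((integrableOn_mul_W b).const_mul _)).const_mul _
    have hadd := integral_add (iW.const_mul (x ^ 2 / (2 * b ^ 2)))
      ((integrableOn_mul_W b).const_mul (x / b ^ 2))
    rw [MeasureTheory.integral_const_mul, hadd, MeasureTheory.integral_const_mul,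
      MeasureTheory.integral_const_mul] at h2
    rw [hsub, MeasureTheory.integral_const_mul] at h2
    have hxb : 0 ≤ x / b ^ 2 := by positivity
    have hex := (Real.exp_pos (-x)).le
    calc Real.exp (-x) * (∫ y in Ioi (0:ℝ), W b y) - (∫ y in Ioi (0:ℝ), W b (y + x))
        ≤ Real.exp (-x) * (x ^ 2 / (2 * b ^ 2) * (∫ y in Ioi (0:ℝ), W b y)
            + x / b ^ 2 * (∫ y in Ioi (0:ℝ), y * W b y)) := h2
    _ ≤ Real.exp (-x) * (x ^ 2 / (2 * b ^ 2) * (∫ y in Ioi (0:ℝ), W b y)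
            + x / b ^ 2 * (∫ y in Ioi (0:ℝ), W b y)) := by
        gcongr
    _ = (x ^ 2 + 2 * x) / (2 * b ^ 2) * (Real.exp (-x) * ∫ y in Ioi (0:ℝ), W b y) := by
        field_simp


lemma cdf_zero : stdNormalCDF 0 = 1 / 2 := by
  have h := one_sub_cdf 0
  rw [tail_zero] at h
  have : (Real.sqrt (2 * π))⁻¹ * (Real.sqrt (2 * π) / 2) = 1 / 2 := by
    field_simp
  rw [this] at h
  linarith

lemma tail_sub (b : ℝ) (hb : 0 < b) (x : ℝ) :
    tail (b + x / b) = Real.exp (-b ^ 2 / 2) / b * ∫ y in Ioi x, W b y := by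
  have hWG : ∀ y : ℝ, W b y = Real.exp (b ^ 2 / 2) * Real.exp (-(b + b⁻¹ * y) ^ 2 / 2) := by
    intro y
    rw [W, ← Real.exp_add]
    congr 1
    field_simp
    ring
  have h1 := integral_comp_mul_left_Ioi (fun z => Real.exp (-(b + z) ^ 2 / 2)) x
    (inv_pos.mpr hb)
  simp only [smul_eq_mul, inv_inv] at h1
  have h2 : (∫ z in Ioi (b⁻¹ * x), Real.exp (-(b + z) ^ 2 / 2))
      = ∫ t in Ioi (b⁻¹ * x + b), Real.exp (-t ^ 2 / 2) := by
    have := (measurePreserving_add_right volume b).setIntegral_preimage_emb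
      (measurableEmbedding_addRight b) (fun t => Real.exp (-t ^ 2 / 2)) (Ioi (b⁻¹ * x + b))
    simp only [preimage_add_const_Ioi, add_sub_cancel_right] at this
    rw [← this]
    apply setIntegral_congr_fun measurableSet_Ioi
    intro z _
    simp [add_comm]
  have h3 : tail (b + x / b) = ∫ t in Ioi (b⁻¹ * x + b), Real.exp (-t ^ 2 / 2) := by
    rw [tail]
    congr 1
    rw [add_comm, div_eq_inv_mul]
  have h4 : (∫ y in Ioi x, W b y)
      = Real.exp (b ^ 2 / 2) * ∫ y in Ioi x, Real.exp (-(b + b⁻¹ * y) ^ 2 / 2) := by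
    rw [← MeasureTheory.integral_const_mul]
    exact setIntegral_congr_fun measurableSet_Ioi (fun y _ => hWG y)
  rw [h3, ← h2, h4, h1]
  have hee : Real.exp (-b ^ 2 / 2) * Real.exp (b ^ 2 / 2) = 1 := by
    rw [← Real.exp_add, show -b ^ 2 / 2 + b ^ 2 / 2 = 0 by ring, Real.exp_zero]
  set I := ∫ z in Ioi (b⁻¹ * x), Real.exp (-(b + z) ^ 2 / 2) with hI
  rw [show Real.exp (-b ^ 2 / 2) / b * (Real.exp (b ^ 2 / 2) * (b * I))
      = (Real.exp (-b ^ 2 / 2) * Real.exp (b ^ 2 / 2)) * I * (b / b) by ring, hee,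
    div_self hb.ne']
  ring

lemma nu_bounds (n : ℕ) (hn1 : 1 ≤ n) (bn : ℝ) (hbnpos : 0 < bn)
    (hbn : stdNormalCDF bn = 1 - 1 / (n : ℝ)) {x : ℝ} (hx : 0 ≤ x) :
    (n : ℝ) * uu (bn + x / bn) ≤ Real.exp (-x) ∧
    Real.exp (-x) - (n : ℝ) * uu (bn + x / bn)
      ≤ (x ^ 2 + 2 * x) / (2 * bn ^ 2) * Real.exp (-x) := by
  have hnpos : (0:ℝ) < n := by exact_mod_cast hn1
  have hrep : ∀ z : ℝ, uu (bn + z / bn)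
      = (Real.sqrt (2 * π))⁻¹ * (Real.exp (-bn ^ 2 / 2) / bn) * ∫ y in Ioi z, W bn y := by
    intro z
    rw [uu, one_sub_cdf, tail_sub bn hbnpos z, mul_assoc]
  set c : ℝ := (Real.sqrt (2 * π))⁻¹ * (Real.exp (-bn ^ 2 / 2) / bn) with hc
  have hcpos : 0 < c := by rw [hc]; positivity
  have hu0 : uu bn = 1 / n := by rw [uu, hbn]; ring
  have hI0 : (n : ℝ) * (c * ∫ y in Ioi (0:ℝ), W bn y) = 1 := by
    have := hrep 0
    rw [show bn + 0 / bn = bn by ring] at this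
    rw [← this, hu0]
    field_simp
  have hb := W_integral_bounds bn hbnpos hx
  constructor
  · have h1 : (n : ℝ) * uu (bn + x / bn) = (n * c) * ∫ y in Ioi x, W bn y := by
      rw [hrep x]; ring
    rw [h1]
    calc (n * c) * ∫ y in Ioi x, W bn y
        ≤ (n * c) * (Real.exp (-x) * ∫ y in Ioi (0:ℝ), W bn y) := by
          apply mul_le_mul_of_nonneg_left hb.1 (by positivity)
    _ = Real.exp (-x) * ((n:ℝ) * (c * ∫ y in Ioi (0:ℝ), W bn y)) := by ring
    _ = Real.exp (-x) := by rw [hI0]; ring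
  · have h1 : (n : ℝ) * uu (bn + x / bn) = (n * c) * ∫ y in Ioi x, W bn y := by
      rw [hrep x]; ring
    have h2 : Real.exp (-x) = (n * c) * (Real.exp (-x) * ∫ y in Ioi (0:ℝ), W bn y) := by
      rw [show (n:ℝ) * c * (Real.exp (-x) * ∫ y in Ioi (0:ℝ), W bn y)
        = Real.exp (-x) * ((n:ℝ) * (c * ∫ y in Ioi (0:ℝ), W bn y)) by ring, hI0, mul_one]
    rw [h1]
    calc Real.exp (-x) - (n * c) * ∫ y in Ioi x, W bn y
        = (n * c) * ((Real.exp (-x) * ∫ y in Ioi (0:ℝ), W bn y) - ∫ y in Ioi x, W bn y) := by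
          rw [mul_sub, ← h2]
    _ ≤ (n * c) * ((x ^ 2 + 2 * x) / (2 * bn ^ 2)
          * (Real.exp (-x) * ∫ y in Ioi (0:ℝ), W bn y)) := by
          apply mul_le_mul_of_nonneg_left hb.2 (by positivity)
    _ = (x ^ 2 + 2 * x) / (2 * bn ^ 2)
          * ((n:ℝ) * (c * ∫ y in Ioi (0:ℝ), W bn y)) * Real.exp (-x) := by ring
    _ = (x ^ 2 + 2 * x) / (2 * bn ^ 2) * Real.exp (-x) := by rw [hI0]; ring

lemma exp_sub_exp_le {p q : ℝ} (hp : 0 ≤ p) (hpq : p ≤ q) :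
    Real.exp (-p) - Real.exp (-q) ≤ q - p := by
  have h1 : Real.exp (-p) ≤ 1 := Real.exp_le_one_iff.mpr (by linarith)
  have h2 : Real.exp (p - q) ≤ 1 := Real.exp_le_one_iff.mpr (by linarith)
  have h3 := Real.add_one_le_exp (p - q)
  have h4 : Real.exp (-q) = Real.exp (-p) * Real.exp (p - q) := by
    rw [← Real.exp_add]; ring_nf
  have h5 := (Real.exp_pos (-p)).le
  nlinarith

lemma qbound {x : ℝ} (hx : 0 ≤ x) :
    (x ^ 2 + 2 * x) / 2 * Real.exp (-x) ≤ (Real.sqrt 2 + 1) / Real.exp (Real.sqrt 2) := by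
  set q : ℝ → ℝ := fun y => (y ^ 2 + 2 * y) / 2 * Real.exp (-y) with hq
  have hs2 : (0:ℝ) ≤ Real.sqrt 2 := Real.sqrt_nonneg 2
  have hs2sq : Real.sqrt 2 ^ 2 = 2 := Real.sq_sqrt (by norm_num)
  have hd : ∀ y : ℝ, HasDerivAt q ((1 - y ^ 2 / 2) * Real.exp (-y)) y := by
    intro y
    have h1 : HasDerivAt (fun t : ℝ => (t ^ 2 + 2 * t) / 2) (y + 1) y := by
      have := ((hasDerivAt_pow 2 y).add ((hasDerivAt_id y).const_mul 2)).div_const 2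
      exact this.congr_deriv (by push_cast; ring)
    have h2 : HasDerivAt (fun t : ℝ => Real.exp (-t)) (-Real.exp (-y)) y := by
      simpa using ((hasDerivAt_id y).neg).exp
    have := h1.mul h2
    refine this.congr_deriv ?_
    ring
  have hqs : q (Real.sqrt 2) = (Real.sqrt 2 + 1) / Real.exp (Real.sqrt 2) := by
    rw [hq]
    simp only
    rw [hs2sq, Real.exp_neg]
    field_simp
    ring
  rw [← hqs]
  rcases le_total x (Real.sqrt 2) with h | h
  · have hmono : MonotoneOn q (Icc 0 (Real.sqrt 2)) := by
      apply monotoneOn_of_deriv_nonneg (convex_Icc _ _)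
      · exact Continuous.continuousOn
          (continuous_iff_continuousAt.mpr (fun y => (hd y).continuousAt))
      · intro y _; exact (hd y).differentiableAt.differentiableWithinAt
      · intro y hy
        rw [interior_Icc] at hy
        rw [(hd y).deriv]
        have hy2 : y ^ 2 ≤ 2 := by
          nlinarith [hy.1.le, hy.2.le, hs2sq]
        have := (Real.exp_pos (-y)).le
        nlinarith
    exact hmono ⟨hx, h⟩ ⟨hs2, le_rfl⟩ h
  · have hanti : AntitoneOn q (Ici (Real.sqrt 2)) := by
      apply antitoneOn_of_deriv_nonpos (convex_Ici _)
      · exact Continuous.continuousOn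
          (continuous_iff_continuousAt.mpr (fun y => (hd y).continuousAt))
      · intro y _; exact (hd y).differentiableAt.differentiableWithinAt
      · intro y hy
        rw [interior_Ici] at hy
        rw [(hd y).deriv]
        have hy2 : 2 ≤ y ^ 2 := by
          nlinarith [le_of_lt (mem_Ioi.mp hy), hs2sq]
        have := (Real.exp_pos (-y)).le
        nlinarith
    exact hanti (mem_Ici.mpr le_rfl) (mem_Ici.mpr h) h

lemma pointwise_bound (n : ℕ) (hn3 : 3 ≤ n) (bn : ℝ) (hbnpos : 0 < bn)
    (hbn : stdNormalCDF bn = 1 - 1 / (n : ℝ)) {x : ℝ} (hx : 0 ≤ x) :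
    |stdNormalCDF (x / bn + bn) ^ n - Real.exp (-Real.exp (-x))|
      ≤ (Real.exp 1 * ((n : ℝ) - 1))⁻¹
        + ((Real.sqrt 2 + 1) / Real.exp (Real.sqrt 2)) / bn ^ 2 := by
  have hn1 : (1:ℝ) ≤ n := by exact_mod_cast le_trans (by norm_num) hn3
  have hn3' : (3:ℝ) ≤ n := by exact_mod_cast hn3
  have hnpos : (0:ℝ) < n := by linarith
  have hcomm : x / bn + bn = bn + x / bn := by ring
  set u : ℝ := uu (bn + x / bn) with hu
  have hupos : 0 < u := uu_pos _
  have hnu := nu_bounds n (by omega) bn hbnpos hbn hx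
  have hnux : (n:ℝ) * u ≤ Real.exp (-x) := hnu.1
  have hnux2 : Real.exp (-x) - (n:ℝ) * u ≤ (x ^ 2 + 2 * x) / (2 * bn ^ 2) * Real.exp (-x) :=
    hnu.2
  have hun : u ≤ 1 / n := by
    have h1 : Real.exp (-x) ≤ 1 := Real.exp_le_one_iff.mpr (by linarith)
    have := hnux
    rw [show (n:ℝ) * u = u * n by ring] at this
    rw [le_div_iff₀ hnpos]
    linarith
  have hu1 : u < 1 := lt_of_le_of_lt hun (by rw [div_lt_one hnpos]; linarith)
  have hcdf : stdNormalCDF (x / bn + bn) = 1 - u := by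
    rw [hcomm, hu, uu]; ring
  rw [hcdf]
  -- Term A : |(1-u)^n - exp(-n u)| ≤ (e (n-1))⁻¹
  have h1u0 : (0:ℝ) ≤ 1 - u := by linarith
  have hba : 1 - u ≤ Real.exp (-u) := by
    have := Real.add_one_le_exp (-u)
    linarith
  have hexpnu : Real.exp (-((n:ℝ) * u)) = Real.exp (-u) ^ n := by
    rw [← Real.exp_nat_mul]
    congr 1
    ring
  have hpowle : (1 - u) ^ n ≤ Real.exp (-((n:ℝ) * u)) := by
    rw [hexpnu]
    exact pow_le_pow_left₀ h1u0 hba n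
  have htermA : Real.exp (-((n:ℝ) * u)) - (1 - u) ^ n ≤ (Real.exp 1 * ((n:ℝ) - 1))⁻¹ := by
    have hav : (0:ℝ) < Real.exp (-u) := Real.exp_pos _
    -- a - b ≤ u^2
    have hab2 : Real.exp (-u) - (1 - u) ≤ u ^ 2 := by
      have hiu : Real.exp (-u) ≤ (1 + u)⁻¹ := by
        rw [Real.exp_neg]
        apply inv_anti₀ (by linarith)
        linarith [Real.add_one_le_exp u]
      have : (1 + u)⁻¹ - (1 - u) ≤ u ^ 2 := by
        rw [inv_eq_one_div, div_sub' (by positivity : (1:ℝ) + u ≠ 0)]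
        rw [div_le_iff₀ (by positivity : (0:ℝ) < 1 + u)]
        nlinarith
      linarith
    -- Bernoulli
    have hber := one_add_mul_le_pow
      (show (-2:ℝ) ≤ (1 - u) / Real.exp (-u) - 1 by
        have : 0 ≤ (1 - u) / Real.exp (-u) := div_nonneg h1u0 hav.le
        linarith) n
    have hapow : (0:ℝ) < Real.exp (-u) ^ n := pow_pos hav n
    have h5 : (1 + (n:ℝ) * ((1 - u) / Real.exp (-u) - 1)) * Real.exp (-u) ^ n
        ≤ (1 - u) ^ n := by
      have := mul_le_mul_of_nonneg_right hber hapow.le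
      rw [show (1 + ((1 - u) / Real.exp (-u) - 1)) = (1 - u) / Real.exp (-u) by ring] at this
      rwa [div_pow, div_mul_cancel₀ _ hapow.ne'] at this
    -- exp(-(n-1)u) ≤ (e (n-1) u)⁻¹
    set v : ℝ := ((n:ℝ) - 1) * u with hv
    have hvpos : 0 < v := by
      apply mul_pos _ hupos
      linarith
    have hev : Real.exp (-v) ≤ (Real.exp 1 * v)⁻¹ := by
      have h6 : Real.exp 1 * v ≤ Real.exp v := by
        have := Real.add_one_le_exp (v - 1)
        calc Real.exp 1 * v = Real.exp 1 * (1 + (v - 1)) := by ring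
        _ ≤ Real.exp 1 * Real.exp (v - 1) := by
            apply mul_le_mul_of_nonneg_left _ (Real.exp_pos 1).le
            linarith
        _ = Real.exp v := by rw [← Real.exp_add]; ring_nf
      rw [Real.exp_neg]
      exact inv_anti₀ (by positivity) h6
    -- combine : exp(-nu) - (1-u)^n ≤ n * (exp(-u) - (1-u)) * exp(-u)^(n-1)-ish
    have hkey : Real.exp (-((n:ℝ) * u)) - (1 - u) ^ n
        ≤ (n:ℝ) * (Real.exp (-u) - (1 - u)) * Real.exp (-v) := by
      have he1 : Real.exp (-u) ^ n = Real.exp (-u) * Real.exp (-v) := by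
        rw [← hexpnu, ← Real.exp_add]
        congr 1
        rw [hv]; ring
      rw [hexpnu]
      have h7 : Real.exp (-u) ^ n - (1 - u) ^ n
          ≤ (n:ℝ) * (Real.exp (-u) - (1 - u)) / Real.exp (-u) * Real.exp (-u) ^ n := by
        have h8 : (1 + (n:ℝ) * ((1 - u) / Real.exp (-u) - 1)) * Real.exp (-u) ^ n
            = Real.exp (-u) ^ n
              - (n:ℝ) * (Real.exp (-u) - (1 - u)) / Real.exp (-u) * Real.exp (-u) ^ n := by
          field_simp
          ring
        linarith [h5, h8.symm.le]
      calc Real.exp (-u) ^ n - (1 - u) ^ n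
          ≤ (n:ℝ) * (Real.exp (-u) - (1 - u)) / Real.exp (-u) * Real.exp (-u) ^ n := h7
      _ = (n:ℝ) * (Real.exp (-u) - (1 - u)) * Real.exp (-v) := by
          rw [he1]
          field_simp
    have hfin : (n:ℝ) * (Real.exp (-u) - (1 - u)) * Real.exp (-v)
        ≤ (Real.exp 1 * ((n:ℝ) - 1))⁻¹ := by
      have h9 : (n:ℝ) * (Real.exp (-u) - (1 - u)) * Real.exp (-v)
          ≤ (n:ℝ) * u ^ 2 * (Real.exp 1 * v)⁻¹ := by
        apply mul_le_mul
        · apply mul_le_mul_of_nonneg_left hab2 hnpos.le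
        · exact hev
        · exact (Real.exp_pos _).le
        · positivity
      have h10 : (n:ℝ) * u ^ 2 * (Real.exp 1 * v)⁻¹
          = ((n:ℝ) * u) * (u / v) * (Real.exp 1)⁻¹ := by
        rw [mul_inv]
        field_simp
      have h11 : u / v ≤ ((n:ℝ) - 1)⁻¹ := by
        rw [div_le_iff₀ hvpos, hv]
        rw [show ((n:ℝ) - 1)⁻¹ * (((n:ℝ) - 1) * u) = (((n:ℝ) - 1) * (((n:ℝ)-1))⁻¹) * u by ring,
          mul_inv_cancel₀ (by linarith : ((n:ℝ) - 1) ≠ 0), one_mul]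
      have h12 : ((n:ℝ) * u) * (u / v) * (Real.exp 1)⁻¹
          ≤ 1 * ((n:ℝ) - 1)⁻¹ * (Real.exp 1)⁻¹ := by
        apply mul_le_mul_of_nonneg_right _ (by positivity)
        apply mul_le_mul
        · have h1 : Real.exp (-x) ≤ 1 := Real.exp_le_one_iff.mpr (by linarith)
          linarith
        · exact h11
        · positivity
        · norm_num
      calc (n:ℝ) * (Real.exp (-u) - (1 - u)) * Real.exp (-v)
          ≤ (n:ℝ) * u ^ 2 * (Real.exp 1 * v)⁻¹ := h9
      _ = ((n:ℝ) * u) * (u / v) * (Real.exp 1)⁻¹ := h10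
      _ ≤ 1 * ((n:ℝ) - 1)⁻¹ * (Real.exp 1)⁻¹ := h12
      _ = (Real.exp 1 * ((n:ℝ) - 1))⁻¹ := by
          rw [mul_inv]
          ring
    linarith
  -- Term B
  have htermB : Real.exp (-((n:ℝ) * u)) - Real.exp (-Real.exp (-x))
      ≤ ((Real.sqrt 2 + 1) / Real.exp (Real.sqrt 2)) / bn ^ 2 := by
    have h1 := exp_sub_exp_le (by positivity : (0:ℝ) ≤ (n:ℝ) * u) hnux
    calc Real.exp (-((n:ℝ) * u)) - Real.exp (-Real.exp (-x))
        ≤ Real.exp (-x) - (n:ℝ) * u := h1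
    _ ≤ (x ^ 2 + 2 * x) / (2 * bn ^ 2) * Real.exp (-x) := hnux2
    _ = ((x ^ 2 + 2 * x) / 2 * Real.exp (-x)) / bn ^ 2 := by
        field_simp
    _ ≤ ((Real.sqrt 2 + 1) / Real.exp (Real.sqrt 2)) / bn ^ 2 := by
        gcongr
        exact qbound hx
  have hB0 : Real.exp (-Real.exp (-x)) ≤ Real.exp (-((n:ℝ) * u)) := by
    apply Real.exp_le_exp.mpr
    linarith
  rw [abs_sub_le_iff]
  constructor
  · -- (1-u)^n - Λ ≤ ...
    calc (1 - u) ^ n - Real.exp (-Real.exp (-x))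
        ≤ Real.exp (-((n:ℝ) * u)) - Real.exp (-Real.exp (-x)) := by linarith
    _ ≤ ((Real.sqrt 2 + 1) / Real.exp (Real.sqrt 2)) / bn ^ 2 := htermB
    _ ≤ _ := by
        have : (0:ℝ) ≤ (Real.exp 1 * ((n:ℝ) - 1))⁻¹ :=
          inv_nonneg.mpr (mul_nonneg (Real.exp_pos 1).le (by linarith))
        linarith
  · calc Real.exp (-Real.exp (-x)) - (1 - u) ^ n
        ≤ Real.exp (-((n:ℝ) * u)) - (1 - u) ^ n := by linarith
    _ ≤ (Real.exp 1 * ((n:ℝ) - 1))⁻¹ := htermA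
    _ ≤ _ := by
        have : (0:ℝ) ≤ ((Real.sqrt 2 + 1) / Real.exp (Real.sqrt 2)) / bn ^ 2 := by positivity
        linarith

lemma log_three_gt_one : 1 < Real.log 3 := by
  rw [Real.lt_log_iff_exp_lt (by norm_num : (0:ℝ) < 3)]
  calc Real.exp 1 < 2.7182818286 := Real.exp_one_lt_d9
  _ < 3 := by norm_num

lemma log_ratio {a b : ℝ} (ha : 3 ≤ a) (hab : a ≤ b) :
    (a - 1) * Real.log b ≤ (b - 1) * Real.log a := by
  set f : ℝ → ℝ := fun s => (s - 1) / Real.log s with hf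
  have hd : ∀ s : ℝ, 3 ≤ s → HasDerivAt f
      ((1 * Real.log s - (s - 1) * s⁻¹) / (Real.log s) ^ 2) s := by
    intro s hs
    have hspos : (0:ℝ) < s := by linarith
    have hlogpos : 0 < Real.log s := by
      calc (0:ℝ) < 1 := one_pos
      _ < Real.log 3 := log_three_gt_one
      _ ≤ Real.log s := Real.log_le_log (by norm_num) hs
    exact ((hasDerivAt_id s).sub_const 1).div (Real.hasDerivAt_log hspos.ne') hlogpos.ne'
  have hmono : MonotoneOn f (Ici 3) := by
    apply monotoneOn_of_deriv_nonneg (convex_Ici 3)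
    · intro s hs
      exact ((hd s hs).continuousAt).continuousWithinAt
    · intro s hs
      rw [interior_Ici] at hs
      exact (hd s (le_of_lt hs)).differentiableAt.differentiableWithinAt
    · intro s hs
      rw [interior_Ici] at hs
      have hs3 : 3 ≤ s := le_of_lt hs
      have hspos : (0:ℝ) < s := by linarith
      have hlog1 : 1 < Real.log s :=
        lt_of_lt_of_le log_three_gt_one (Real.log_le_log (by norm_num) hs3)
      rw [(hd s hs3).deriv]
      apply div_nonneg _ (sq_nonneg _)
      have : (s - 1) * s⁻¹ ≤ 1 := by
        rw [← div_eq_mul_inv, div_le_one hspos]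
        linarith
      linarith
  have h := hmono (mem_Ici.mpr ha) (mem_Ici.mpr (le_trans ha hab)) hab
  rw [hf] at h
  simp only at h
  have hla : 0 < Real.log a :=
    lt_trans one_pos (lt_of_lt_of_le log_three_gt_one (Real.log_le_log (by norm_num) ha))
  have hlb : 0 < Real.log b :=
    lt_trans one_pos (lt_of_lt_of_le log_three_gt_one
      (Real.log_le_log (by norm_num) (le_trans ha hab)))
  rw [div_le_div_iff₀ hla hlb] at h
  exact h

end AH

/-- For `n₀ ≥ 3` and `n ≥ n₀`,
`sup_{x ≥ 0} |Φⁿ(x/bₙ + bₙ) − Λ(x)| < C̄⁺(n₀)/log n` with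
`C̄⁺(n₀) = ((√2+1)/e^{√2})·(log n₀)/b_{n₀}² + (log n₀)/(2(n₀ − 1))`. -/
theorem sup_nonneg_bound_AH (n₀ n : ℕ) (hn₀ : 3 ≤ n₀) (hn : n₀ ≤ n)
    (b₀ bn : ℝ) (hb₀ : stdNormalCDF b₀ = 1 - 1 / (n₀ : ℝ))
    (hbn : stdNormalCDF bn = 1 - 1 / (n : ℝ)) :
    (⨆ x : Set.Ici (0 : ℝ),
        |stdNormalCDF ((x : ℝ) / bn + bn) ^ n - gumbelCDF (x : ℝ)|)
      < ((Real.sqrt 2 + 1) / Real.exp (Real.sqrt 2) * (Real.log n₀ / b₀ ^ 2)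
          + Real.log n₀ / (2 * ((n₀ : ℝ) - 1)))
        / Real.log n := by
  have hn3 : 3 ≤ n := le_trans hn₀ hn
  have hn₀3 : (3:ℝ) ≤ (n₀:ℝ) := by exact_mod_cast hn₀
  have hn3' : (3:ℝ) ≤ (n:ℝ) := by exact_mod_cast hn3
  have hnn₀ : (n₀:ℝ) ≤ (n:ℝ) := by exact_mod_cast hn
  have hn₀pos : (0:ℝ) < n₀ := by linarith
  have hnpos : (0:ℝ) < n := by linarith
  have hlogn₀ : 0 < Real.log n₀ :=
    lt_trans one_pos (lt_of_lt_of_le AH.log_three_gt_one (Real.log_le_log (by norm_num) hn₀3))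
  have hlogn : 0 < Real.log n :=
    lt_trans one_pos (lt_of_lt_of_le AH.log_three_gt_one (Real.log_le_log (by norm_num) hn3'))
  -- positivity of b₀, bn
  have hhalf₀ : stdNormalCDF 0 < stdNormalCDF b₀ := by
    rw [AH.cdf_zero, hb₀]
    have : 1 / (n₀:ℝ) ≤ 1 / 3 := by
      apply div_le_div_of_nonneg_left (by norm_num) (by norm_num) hn₀3
    linarith
  have hb₀pos : 0 < b₀ := by
    by_contra h
    push_neg at h
    rcases eq_or_lt_of_le h with h' | h'
    · rw [h'] at hhalf₀; exact lt_irrefl _ hhalf₀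
    · exact absurd (AH.cdf_strictMono h') (not_lt_of_gt hhalf₀)
  have hhalfn : stdNormalCDF 0 < stdNormalCDF bn := by
    rw [AH.cdf_zero, hbn]
    have : 1 / (n:ℝ) ≤ 1 / 3 := by
      apply div_le_div_of_nonneg_left (by norm_num) (by norm_num) hn3'
    linarith
  have hbnpos : 0 < bn := by
    by_contra h
    push_neg at h
    rcases eq_or_lt_of_le h with h' | h'
    · rw [h'] at hhalfn; exact lt_irrefl _ hhalfn
    · exact absurd (AH.cdf_strictMono h') (not_lt_of_gt hhalfn)
  have hb₀bn : b₀ ≤ bn := by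
    have hcdfle : stdNormalCDF b₀ ≤ stdNormalCDF bn := by
      rw [hb₀, hbn]
      have : 1 / (n:ℝ) ≤ 1 / (n₀:ℝ) :=
        div_le_div_of_nonneg_left (by norm_num) hn₀pos hnn₀
      linarith
    exact (AH.cdf_strictMono.le_iff_le).mp hcdfle
  -- HH values
  have hH₀ : AH.HH b₀ = Real.log n₀ := by
    rw [AH.HH, AH.uu, hb₀, show 1 - (1 - 1 / (n₀:ℝ)) = ((n₀:ℝ))⁻¹ by rw [one_div]; ring,
      Real.log_inv]
    ring
  have hHn : AH.HH bn = Real.log n := by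
    rw [AH.HH, AH.uu, hbn, show 1 - (1 - 1 / (n:ℝ)) = ((n:ℝ))⁻¹ by rw [one_div]; ring,
      Real.log_inv]
    ring
  have hratio := AH.ratio_mono hb₀pos.le hb₀bn
  rw [hH₀, hHn] at hratio
  have hb₀2 : 0 < b₀ ^ 2 := by positivity
  have hbn2 : 0 < bn ^ 2 := by positivity
  have hcross : b₀ ^ 2 * Real.log n ≤ bn ^ 2 * Real.log n₀ :=
    (div_le_div_iff₀ hlogn₀ hlogn).mp hratio
  set K : ℝ := (Real.sqrt 2 + 1) / Real.exp (Real.sqrt 2) with hK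
  have hKpos : 0 < K := by rw [hK]; positivity
  -- term 1
  have hterm1 : K / bn ^ 2 ≤ K * (Real.log n₀ / b₀ ^ 2) / Real.log n := by
    rw [show K * (Real.log n₀ / b₀ ^ 2) / Real.log n
      = K * Real.log n₀ / (b₀ ^ 2 * Real.log n) by field_simp]
    rw [div_le_div_iff₀ hbn2 (by positivity)]
    nlinarith
  -- term 2
  have hterm2 : (Real.exp 1 * ((n:ℝ) - 1))⁻¹ < Real.log n₀ / (2 * ((n₀:ℝ) - 1)) / Real.log n := by
    have hlr := AH.log_ratio hn₀3 hnn₀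
    have he2 : (2:ℝ) < Real.exp 1 := by
      calc (2:ℝ) < 2.7182818283 := by norm_num
      _ < Real.exp 1 := Real.exp_one_gt_d9
    have hBpos : 0 < 2 * ((n₀:ℝ) - 1) * Real.log n := by
      apply mul_pos _ hlogn
      nlinarith
    have hApos : 0 < Real.exp 1 * ((n:ℝ) - 1) := by
      apply mul_pos (Real.exp_pos 1)
      linarith
    have hchain : 2 * ((n₀:ℝ) - 1) * Real.log n
        < Real.log n₀ * (Real.exp 1 * ((n:ℝ) - 1)) := by
      have h1 : 2 * ((n₀:ℝ) - 1) * Real.log n < Real.exp 1 * (((n₀:ℝ) - 1) * Real.log n) := by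
        have hpos : 0 < ((n₀:ℝ) - 1) * Real.log n := by
          apply mul_pos _ hlogn
          linarith
        nlinarith
      have h2 : Real.exp 1 * (((n₀:ℝ) - 1) * Real.log n)
          ≤ Real.exp 1 * (((n:ℝ) - 1) * Real.log n₀) :=
        mul_le_mul_of_nonneg_left hlr (Real.exp_pos 1).le
      calc 2 * ((n₀:ℝ) - 1) * Real.log n
          < Real.exp 1 * (((n₀:ℝ) - 1) * Real.log n) := h1
      _ ≤ Real.exp 1 * (((n:ℝ) - 1) * Real.log n₀) := h2
      _ = Real.log n₀ * (Real.exp 1 * ((n:ℝ) - 1)) := by ring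
    rw [show Real.log n₀ / (2 * ((n₀:ℝ) - 1)) / Real.log n
      = Real.log n₀ / (2 * ((n₀:ℝ) - 1) * Real.log n) by rw [div_div]]
    rw [inv_eq_one_div, div_lt_div_iff₀ hApos hBpos]
    linarith
  -- sup bound
  haveI : Nonempty (Set.Ici (0:ℝ)) := ⟨⟨0, Set.mem_Ici.mpr (le_refl 0)⟩⟩
  have hsup : (⨆ x : Set.Ici (0:ℝ),
        |stdNormalCDF ((x : ℝ) / bn + bn) ^ n - gumbelCDF (x : ℝ)|)
      ≤ (Real.exp 1 * ((n:ℝ) - 1))⁻¹ + K / bn ^ 2 := by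
    apply ciSup_le
    intro x
    have hx : (0:ℝ) ≤ (x : ℝ) := x.2
    simp only [gumbelCDF]
    exact AH.pointwise_bound n hn3 bn hbnpos hbn hx
  have hlt : (Real.exp 1 * ((n:ℝ) - 1))⁻¹ + K / bn ^ 2
      < (K * (Real.log n₀ / b₀ ^ 2) + Real.log n₀ / (2 * ((n₀:ℝ) - 1))) / Real.log n := by
    rw [add_div]
    linarith
  exact lt_of_le_of_lt hsup hlt
end

section
/- As n → ∞, b_n − β̄_n = O((log log n)²/(log n)^{5/2}), where β̄_n = (log(n²/(2π)) − log log(n²/(2π)) + (log log(n²/(2π)) − 2)/log(n²/(2π)))^{1/2}. -/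
open Real Filter Asymptotics MeasureTheory Set Topology

namespace BnAux

noncomputable def ψ (t : ℝ) : ℝ := Real.exp (-t ^ 2 / 2)

lemma ψ_pos (t : ℝ) : 0 < ψ t := Real.exp_pos _

lemma ψ_cont : Continuous ψ := by unfold ψ; continuity

lemma integrable_ψ : Integrable ψ := by
  have h := integrable_exp_neg_mul_sq (by norm_num : (0:ℝ) < 1/2)
  have : ψ = fun x : ℝ => Real.exp (-(1/2) * x ^ 2) := by
    funext x; unfold ψ; ring_nf
  rw [this]; exact h

lemma ψ_total : ∫ t : ℝ, ψ t = Real.sqrt (2 * Real.pi) := by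
  have h := integral_gaussian (1/2 : ℝ)
  have : ψ = fun x : ℝ => Real.exp (-(1/2) * x ^ 2) := by
    funext x; unfold ψ; ring_nf
  rw [this, h]
  rw [show (2:ℝ)*Real.pi = Real.pi/(1/2) by ring]

/-- upper Gaussian tail integral -/
noncomputable def F (x : ℝ) : ℝ := ∫ t in Set.Ioi x, ψ t

lemma hasDerivAt_exp_neg_sq (t : ℝ) :
    HasDerivAt (fun s : ℝ => Real.exp (-s ^ 2 / 2)) (-t * ψ t) t := by
  have h1 : HasDerivAt (fun s : ℝ => -s ^ 2 / 2) (-t) t := by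
    have := ((hasDerivAt_pow 2 t).neg).div_const 2
    refine this.congr_deriv ?_
    ring
  have := h1.exp
  convert this using 1
  unfold ψ; ring

lemma hasDerivAt_G1 (t : ℝ) (ht : 0 < t) :
    HasDerivAt (fun s : ℝ => -((1/s - 1/s^3) * Real.exp (-s ^ 2 / 2)))
      ((1 - 3/t^4) * ψ t) t := by
  have h3 : HasDerivAt (fun s : ℝ => s ^ 3) (3 * t ^ 2) t := by
    simpa using hasDerivAt_pow 3 t
  have hinv : HasDerivAt (fun s : ℝ => 1/s - 1/s^3)
      (-(1/t^2) + (3 * t^2)/(t^3)^2) t := by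
    have ha : HasDerivAt (fun s : ℝ => 1/s) (-(1/t^2)) t := by
      simpa [one_div] using hasDerivAt_inv ht.ne'
    have hb : HasDerivAt (fun s : ℝ => 1/s^3) (-(3 * t^2)/(t^3)^2) t := by
      simpa [one_div, Pi.inv_def] using h3.inv (by positivity)
    simpa [sub_eq_add_neg, neg_div, Pi.add_def, Pi.neg_def] using ha.add hb.neg
  have := (hinv.mul (hasDerivAt_exp_neg_sq t)).neg
  refine this.congr_deriv ?_
  unfold ψ
  field_simp
  ring

lemma hasDerivAt_G2 (t : ℝ) (ht : 0 < t) :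
    HasDerivAt (fun s : ℝ => -((1/s - 1/s^3 + 3/s^5) * Real.exp (-s ^ 2 / 2)))
      ((1 + 15/t^6) * ψ t) t := by
  have h3 : HasDerivAt (fun s : ℝ => s ^ 3) (3 * t ^ 2) t := by
    simpa using hasDerivAt_pow 3 t
  have h5 : HasDerivAt (fun s : ℝ => s ^ 5) (5 * t ^ 4) t := by
    simpa using hasDerivAt_pow 5 t
  have hinv : HasDerivAt (fun s : ℝ => 1/s - 1/s^3 + 3/s^5)
      (-(1/t^2) - (-(3 * t^2)/(t^3)^2) + 3 * (-(5 * t^4)/(t^5)^2)) t := by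
    have ha : HasDerivAt (fun s : ℝ => 1/s) (-(1/t^2)) t := by
      simpa [one_div] using hasDerivAt_inv ht.ne'
    have hb : HasDerivAt (fun s : ℝ => 1/s^3) (-(3 * t^2)/(t^3)^2) t := by
      simpa [one_div, Pi.inv_def] using h3.inv (by positivity)
    have hc : HasDerivAt (fun s : ℝ => 3/s^5) (3 * (-(5 * t^4)/(t^5)^2)) t := by
      have := (h5.inv (by positivity : t^5 ≠ 0)).const_mul (3:ℝ)
      simpa [one_div, div_eq_mul_inv, mul_comm] using this
    exact (ha.sub hb).add hc
  have := (hinv.mul (hasDerivAt_exp_neg_sq t)).neg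
  refine this.congr_deriv ?_
  unfold ψ
  field_simp
  ring


lemma tendsto_exp_neg_sq : Tendsto (fun s : ℝ => Real.exp (-s ^ 2 / 2)) atTop (𝓝 0) := by
  apply Real.tendsto_exp_atBot.comp
  have h : Tendsto (fun s : ℝ => s ^ 2 / 2) atTop atTop :=
    (tendsto_pow_atTop (two_ne_zero)).atTop_div_const two_pos
  have h2 := tendsto_neg_atBot_iff.mpr h
  exact h2.congr (fun s => by ring)

lemma tendsto_inv_pow_zero (k : ℕ) (hk : k ≠ 0) :
    Tendsto (fun s : ℝ => 1 / s ^ k) atTop (𝓝 0) := by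
  have := (tendsto_pow_atTop hk (α := ℝ)).inv_tendsto_atTop
  exact this.congr (fun s => (one_div _).symm)

lemma tendsto_G1 :
    Tendsto (fun s : ℝ => -((1/s - 1/s^3) * Real.exp (-s ^ 2 / 2))) atTop (𝓝 0) := by
  have hpoly : Tendsto (fun s : ℝ => 1/s - 1/s^3) atTop (𝓝 (0 - 0)) :=
    ((tendsto_inv_pow_zero 1 one_ne_zero).sub (tendsto_inv_pow_zero 3 three_ne_zero)).congr
      (fun s => by norm_num)
  have h := hpoly.mul tendsto_exp_neg_sq
  simpa using h.neg

lemma tendsto_G2 :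
    Tendsto (fun s : ℝ => -((1/s - 1/s^3 + 3/s^5) * Real.exp (-s ^ 2 / 2))) atTop (𝓝 0) := by
  have hpoly : Tendsto (fun s : ℝ => 1/s - 1/s^3 + 3/s^5) atTop (𝓝 (0 - 0 + 3 * 0)) := by
    have h1 := tendsto_inv_pow_zero 1 one_ne_zero
    have h3 := tendsto_inv_pow_zero 3 three_ne_zero
    have h5 := (tendsto_inv_pow_zero 5 (by norm_num)).const_mul (3:ℝ)
    exact ((h1.sub h3).add h5).congr (fun s => by rw [pow_one]; ring)
  have h := hpoly.mul tendsto_exp_neg_sq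
  simpa using h.neg

lemma integrableOn_aux (x : ℝ) (hx : 0 < x) (c : ℝ) (k : ℕ) :
    IntegrableOn (fun t : ℝ => (1 + c / t ^ k) * ψ t) (Set.Ioi x) := by
  have hmeas : AEStronglyMeasurable (fun t : ℝ => (1 + c / t ^ k) * ψ t)
      (volume.restrict (Set.Ioi x)) := by
    apply ContinuousOn.aestronglyMeasurable _ measurableSet_Ioi
    apply ContinuousOn.mul _ ψ_cont.continuousOn
    apply ContinuousOn.add continuousOn_const
    refine ContinuousOn.div continuousOn_const (continuousOn_pow k) (fun t ht => ?_)
    have ht' : 0 < t := lt_trans hx ht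
    positivity
  refine Integrable.mono (g := fun t : ℝ => (1 + |c| / x ^ k) * ψ t)
    ((integrable_ψ.const_mul _).integrableOn) hmeas ?_
  rw [ae_restrict_iff' measurableSet_Ioi]
  filter_upwards [] with t ht
  have ht' : 0 < t := lt_trans hx ht
  have hψ : 0 < ψ t := ψ_pos t
  rw [Real.norm_eq_abs, Real.norm_eq_abs, abs_mul, abs_mul, abs_of_pos hψ]
  apply mul_le_mul_of_nonneg_right _ hψ.le
  rw [abs_of_pos (by positivity : (0:ℝ) < 1 + |c| / x ^ k)]
  have h1 : |c / t ^ k| ≤ |c| / x ^ k := by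
    rw [abs_div, abs_pow, abs_of_pos ht']
    apply div_le_div_of_nonneg_left (abs_nonneg c) (by positivity)
      (pow_le_pow_left₀ hx.le ht.le k) |>.trans_eq rfl
  calc |1 + c / t ^ k| ≤ |1| + |c / t ^ k| := abs_add_le _ _
    _ ≤ 1 + |c| / x ^ k := by rw [abs_one]; linarith

lemma ftc_G1 (x : ℝ) (hx : 0 < x) :
    ∫ t in Set.Ioi x, (1 + (-3) / t ^ 4) * ψ t = (1/x - 1/x^3) * ψ x := by
  have h := integral_Ioi_of_hasDerivAt_of_tendsto'
    (f := fun s : ℝ => -((1/s - 1/s^3) * Real.exp (-s ^ 2 / 2)))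
    (f' := fun t : ℝ => (1 + (-3) / t ^ 4) * ψ t) (a := x)
    (fun t ht => by
      have ht' : 0 < t := lt_of_lt_of_le hx ht
      have := hasDerivAt_G1 t ht'
      refine this.congr_deriv ?_
      ring)
    (integrableOn_aux x hx (-3) 4) tendsto_G1
  rw [h]
  unfold ψ
  ring

lemma ftc_G2 (x : ℝ) (hx : 0 < x) :
    ∫ t in Set.Ioi x, (1 + 15 / t ^ 6) * ψ t = (1/x - 1/x^3 + 3/x^5) * ψ x := by
  have h := integral_Ioi_of_hasDerivAt_of_tendsto'
    (f := fun s : ℝ => -((1/s - 1/s^3 + 3/s^5) * Real.exp (-s ^ 2 / 2)))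
    (f' := fun t : ℝ => (1 + 15 / t ^ 6) * ψ t) (a := x)
    (fun t ht => hasDerivAt_G2 t (lt_of_lt_of_le hx ht))
    (integrableOn_aux x hx 15 6) tendsto_G2
  rw [h]
  unfold ψ
  ring

lemma F_bounds (x : ℝ) (hx : 0 < x) :
    (1/x - 1/x^3) * ψ x ≤ F x ∧ F x ≤ (1/x - 1/x^3 + 3/x^5) * ψ x := by
  have hint : IntegrableOn ψ (Set.Ioi x) := integrable_ψ.integrableOn
  constructor
  · rw [← ftc_G1 x hx]
    apply setIntegral_mono_on (integrableOn_aux x hx (-3) 4) hint measurableSet_Ioi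
    intro t ht
    have ht' : 0 < t := lt_trans hx ht
    have hψ : 0 < ψ t := ψ_pos t
    have : (1 : ℝ) + (-3) / t ^ 4 ≤ 1 := by
      have : (0:ℝ) < t ^ 4 := by positivity
      rw [neg_div]
      linarith [div_pos (by norm_num : (0:ℝ) < 3) this]
    nlinarith
  · rw [← ftc_G2 x hx]
    apply setIntegral_mono_on hint (integrableOn_aux x hx 15 6) measurableSet_Ioi
    intro t ht
    have ht' : 0 < t := lt_trans hx ht
    have hψ : 0 < ψ t := ψ_pos t
    have : (1 : ℝ) ≤ 1 + 15 / t ^ 6 := by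
      have : (0:ℝ) < t ^ 6 := by positivity
      linarith [div_pos (by norm_num : (0:ℝ) < 15) this]
    nlinarith

lemma mills_log (x y : ℝ) (hx : 2 ≤ x) (hy : 0 < y) (hF : F x = y) :
    |x^2 + Real.log (x^2) + 2/x^2 - Real.log (1/y^2)| ≤ 6/x^4 := by
  have hx0 : (0:ℝ) < x := by linarith
  have hx2 : (0:ℝ) < x^2 := by positivity
  have hB : (4:ℝ) ≤ x^2 := by nlinarith
  set u : ℝ := 1/x^2 with hu_def
  have hu0 : 0 < u := by positivity
  have hu4 : u ≤ 1/4 := by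
    rw [hu_def]
    rw [div_le_div_iff₀ hx2 (by norm_num)]
    linarith
  have hA0 : (0:ℝ) < 1 - u := by linarith
  have hC0 : (0:ℝ) < 1 - u + 3*u^2 := by nlinarith
  obtain ⟨h1, h2⟩ := F_bounds x hx0
  rw [hF] at h1 h2
  have e1 : (1 - u)/x * ψ x = (1/x - 1/x^3) * ψ x := by
    rw [hu_def]; congr 1; field_simp
  have e2 : (1 - u + 3*u^2)/x * ψ x = (1/x - 1/x^3 + 3/x^5) * ψ x := by
    rw [hu_def]; congr 1; field_simp
  have hψx : Real.log (ψ x) = -x^2/2 := by unfold ψ; exact Real.log_exp _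
  have hlogA : Real.log ((1 - u)/x * ψ x) = Real.log (1 - u) - Real.log x - x^2/2 := by
    rw [Real.log_mul (by positivity) (ψ_pos x).ne', Real.log_div hA0.ne' hx0.ne', hψx]
    ring
  have hlogC : Real.log ((1 - u + 3*u^2)/x * ψ x)
      = Real.log (1 - u + 3*u^2) - Real.log x - x^2/2 := by
    rw [Real.log_mul (by positivity) (ψ_pos x).ne', Real.log_div hC0.ne' hx0.ne', hψx]
    ring
  have hl1 : Real.log (1 - u) - Real.log x - x^2/2 ≤ Real.log y := by
    rw [← hlogA]
    exact Real.log_le_log (mul_pos (div_pos hA0 hx0) (ψ_pos x)) (e1 ▸ h1)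
  have hl2 : Real.log y ≤ Real.log (1 - u + 3*u^2) - Real.log x - x^2/2 := by
    rw [← hlogC]
    exact Real.log_le_log hy (h2.trans_eq e2.symm)
  have hlogx2 : Real.log (x^2) = 2 * Real.log x := by
    rw [Real.log_pow]; push_cast; ring
  have hy2 : Real.log (1/y^2) = -(2 * Real.log y) := by
    rw [one_div, Real.log_inv, Real.log_pow]; push_cast; ring
  -- bounds on the logs
  have hA_ub : Real.log (1 - u) ≤ -u := by
    have := Real.log_le_sub_one_of_pos hA0; linarith
  have hA_lb : -u - 2*u^2 ≤ Real.log (1 - u) := by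
    have hinv : Real.log (1/(1 - u)) ≤ 1/(1 - u) - 1 :=
      Real.log_le_sub_one_of_pos (by positivity)
    rw [one_div, Real.log_inv] at hinv
    have h3 : (1 - u)⁻¹ - 1 = u/(1 - u) := by field_simp; ring
    have h4 : u/(1 - u) ≤ u + 2*u^2 := by
      rw [div_le_iff₀ hA0]; nlinarith
    linarith
  have hC_ub : Real.log (1 - u + 3*u^2) ≤ -u + 3*u^2 := by
    have := Real.log_le_sub_one_of_pos hC0; linarith
  have h6 : 6/x^4 = 6*u^2 := by rw [hu_def]; field_simp
  have h2u : 2/x^2 = 2*u := by rw [hu_def]; ring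
  rw [abs_le, h6, h2u]
  clear hF h1 h2 e1 e2 hlogA hlogC hψx
  constructor
  · have h7 : Real.log (1/y^2) ≤ x^2 + Real.log (x^2) + 2*u + 4*u^2 := by
      rw [hy2, hlogx2]; linarith
    linarith [sq_nonneg u]
  · have h8 : x^2 + Real.log (x^2) + 2*u - 6*u^2 ≤ Real.log (1/y^2) := by
      rw [hy2, hlogx2]; linarith
    linarith

lemma g_gap (x y : ℝ) (hx : 2 ≤ x) (hxy : x ≤ y) :
    y - x ≤ (y + Real.log y + 2/y) - (x + Real.log x + 2/x) := by
  have hx0 : (0:ℝ) < x := by linarith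
  have hy0 : (0:ℝ) < y := by linarith
  have hl : Real.log (x/y) ≤ x/y - 1 := Real.log_le_sub_one_of_pos (by positivity)
  rw [Real.log_div hx0.ne' hy0.ne'] at hl
  have key : 2/x - 2/y ≤ 1 - x/y := by
    have h1 : 2/x - 2/y = (2*(y-x))/(x*y) := by field_simp
    have h2 : 1 - x/y = (y-x)/y := by field_simp
    rw [h1, h2, div_le_div_iff₀ (by positivity) hy0]
    nlinarith [mul_nonneg (mul_nonneg (sub_nonneg.2 hxy) hy0.le) (sub_nonneg.2 hx)]
  linarith

lemma g_abs_gap (x y : ℝ) (hx : 2 ≤ x) (hy : 2 ≤ y) :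
    |x - y| ≤ |(x + Real.log x + 2/x) - (y + Real.log y + 2/y)| := by
  rcases le_total x y with h | h
  · rw [abs_sub_comm, abs_of_nonneg (by linarith),
      abs_sub_comm ((x + Real.log x + 2/x)) _,
      abs_of_nonneg (by linarith [g_gap x y hx h])]
    linarith [g_gap x y hx h]
  · rw [abs_of_nonneg (by linarith), abs_of_nonneg (by linarith [g_gap y x hy h])]
    linarith [g_gap y x hy h]

lemma log4_ge_one : (1:ℝ) ≤ Real.log 4 := by
  have h2 : Real.log 4 = 2 * Real.log 2 := by
    rw [show (4:ℝ) = 2^2 by norm_num, Real.log_pow]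
    push_cast; ring
  have := Real.log_two_gt_d9
  rw [h2]; linarith

set_option maxHeartbeats 2000000 in
lemma key_eventually :
    ∀ᶠ ℓ : ℝ in atTop, ∀ β : ℝ, 2 ≤ β →
      |β^2 + Real.log (β^2) + 2/β^2 - ℓ| ≤ 6/β^4 →
      |β - Real.sqrt (ℓ - Real.log ℓ + (Real.log ℓ - 2)/ℓ)|
        ≤ 100 * (Real.log ℓ)^2 / ℓ^((5:ℝ)/2) := by
  have fa : ∀ᶠ ℓ : ℝ in atTop, (16:ℝ) ≤ ℓ := eventually_ge_atTop 16
  have fb : ∀ᶠ ℓ : ℝ in atTop, (2:ℝ) ≤ Real.log ℓ :=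
    Real.tendsto_log_atTop.eventually_ge_atTop 2
  have fc : ∀ᶠ ℓ : ℝ in atTop, Real.log ℓ ≤ ℓ/8 := by
    have h := Real.isLittleO_log_id_atTop.bound (by norm_num : (0:ℝ) < 1/8)
    filter_upwards [h, eventually_ge_atTop (1:ℝ)] with ℓ h1 h2
    simp only [id_eq, Real.norm_eq_abs] at h1
    rw [abs_of_nonneg (Real.log_nonneg h2), abs_of_nonneg (by linarith)] at h1
    linarith
  filter_upwards [fa, fb, fc] with ℓ ha hb hc β hβ hineq
  clear fa fb fc
  set L := Real.log ℓ with hL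
  clear_value L
  have hℓ0 : (0:ℝ) < ℓ := by linarith
  have hβ0 : (0:ℝ) < β := by linarith
  set B := β^2 with hBdef
  clear_value B
  have hβ4 : β^4 = B^2 := by rw [hBdef]; ring
  rw [hβ4] at hineq
  have hB4 : (4:ℝ) ≤ B := by rw [hBdef]; nlinarith
  have hB0 : (0:ℝ) < B := by linarith
  have hlogB1 : 1 ≤ Real.log B := le_trans log4_ge_one (Real.log_le_log (by norm_num) hB4)
  obtain ⟨hlo, hhi⟩ := abs_le.1 hineq
  have h6B : 6/B^2 ≤ 1/2 := by rw [div_le_div_iff₀ (by positivity) (by norm_num)]; nlinarith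
  have h2B : 2/B ≤ 1/2 := by rw [div_le_div_iff₀ hB0 (by norm_num)]; linarith
  have h2B0 : 0 < 2/B := by positivity
  have h6B0 : 0 < 6/B^2 := by positivity
  have hBle : B ≤ ℓ := by linarith
  have hlogBle : Real.log B ≤ L := by rw [hL]; exact Real.log_le_log hB0 hBle
  have hBge : ℓ/2 ≤ B := by linarith
  set T := ℓ - L + (L - 2)/ℓ with hTdef
  clear_value T
  have hL2 : 0 ≤ (L - 2)/ℓ := div_nonneg (by linarith) hℓ0.le
  have hTge : ℓ/2 ≤ T := by rw [hTdef]; linarith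
  have hT0 : (0:ℝ) < T := by linarith
  have hT2 : (2:ℝ) ≤ T := by linarith
  have hTle : T ≤ ℓ := by
    have h : (L - 2)/ℓ ≤ L := by rw [div_le_iff₀ hℓ0]; nlinarith
    rw [hTdef]; linarith
  set u := L/ℓ - (L - 2)/ℓ^2 with hu_def
  clear_value u
  have hu0 : 0 < u := by
    rw [hu_def, sub_pos]
    rw [div_lt_div_iff₀ (by positivity) hℓ0]
    nlinarith
  have huLl : u ≤ L/ℓ := by
    rw [hu_def]
    have : 0 ≤ (L - 2)/ℓ^2 := div_nonneg (by linarith) (by positivity)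
    linarith
  have hLl8 : L/ℓ ≤ 1/8 := by rw [div_le_div_iff₀ hℓ0 (by norm_num)]; linarith
  have hu18 : u ≤ 1/8 := le_trans huLl hLl8
  have h1u : (0:ℝ) < 1 - u := by linarith
  have hT_eq : T = ℓ * (1 - u) := by rw [hTdef, hu_def]; field_simp; ring
  have hlogT : Real.log T = L + Real.log (1 - u) := by
    rw [hT_eq, Real.log_mul hℓ0.ne' h1u.ne', hL]
  have hlog1u_ub : Real.log (1 - u) ≤ -u := by
    have := Real.log_le_sub_one_of_pos h1u; linarith
  have hlog1u_lb : -u - 2*u^2 ≤ Real.log (1 - u) := by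
    have hinv : Real.log (1/(1 - u)) ≤ 1/(1 - u) - 1 :=
      Real.log_le_sub_one_of_pos (by positivity)
    rw [one_div, Real.log_inv] at hinv
    have h3 : (1 - u)⁻¹ - 1 = u/(1 - u) := by field_simp; ring
    have h4 : u/(1 - u) ≤ u + 2*u^2 := by
      rw [div_le_iff₀ h1u]; nlinarith
    linarith
  have hid : T + Real.log T + 2/T - ℓ
      = (Real.log (1 - u) + u) + (2/T - 2/ℓ) + (L - 2)/ℓ^2 := by
    rw [hlogT]
    have e : T = ℓ - L + (L - 2)/ℓ := hTdef
    rw [hu_def]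
    field_simp
    ring_nf
    rw [e]
    field_simp
    ring
  have hlT : ℓ - T ≤ L := by rw [hTdef]; linarith
  have h2T : |2/T - 2/ℓ| ≤ 4*L/ℓ^2 := by
    have hnn : 0 ≤ 2/T - 2/ℓ := by
      rw [sub_nonneg, div_le_div_iff₀ hℓ0 hT0]; linarith
    rw [abs_of_nonneg hnn, div_sub_div _ _ hT0.ne' hℓ0.ne',
      div_le_div_iff₀ (by positivity) (by positivity)]
    have k1 : (ℓ - T)*ℓ^2 ≤ L*ℓ^2 := mul_le_mul_of_nonneg_right hlT (sq_nonneg ℓ)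
    have k2 : L*((ℓ/2)*ℓ) ≤ L*(T*ℓ) := mul_le_mul_of_nonneg_left
      (mul_le_mul_of_nonneg_right hTge hℓ0.le) (by linarith : (0:ℝ) ≤ L)
    linarith
  have habs1 : |Real.log (1 - u) + u| ≤ 2*u^2 := by
    rw [abs_le]; constructor <;> linarith
  have huu : u^2 ≤ L^2/ℓ^2 := by
    rw [← div_pow]
    exact pow_le_pow_left₀ hu0.le huLl 2
  have hLLpos : (0:ℝ) ≤ L^2/ℓ^2 := by positivity
  have hgT : |T + Real.log T + 2/T - ℓ| ≤ 7*L^2/ℓ^2 := by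
    rw [hid]
    have habs3 : |(L - 2)/ℓ^2| = (L - 2)/ℓ^2 :=
      abs_of_nonneg (div_nonneg (by linarith) (by positivity))
    calc |(Real.log (1 - u) + u) + (2/T - 2/ℓ) + (L - 2)/ℓ^2|
        ≤ |Real.log (1 - u) + u| + |2/T - 2/ℓ| + |(L - 2)/ℓ^2| := abs_add_three _ _ _
      _ ≤ 2*u^2 + 4*L/ℓ^2 + (L - 2)/ℓ^2 := by rw [habs3]; linarith
      _ ≤ 2*(L^2/ℓ^2) + 4*L/ℓ^2 + (L - 2)/ℓ^2 := by linarith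
      _ = (2*L^2 + 4*L + (L - 2))/ℓ^2 := by ring
      _ ≤ 7*L^2/ℓ^2 := by
          gcongr
          nlinarith [mul_nonneg (by linarith : (0:ℝ) ≤ L) (by linarith : (0:ℝ) ≤ L - 1)]
  have hBT : |B - T| ≤ 16*L^2/ℓ^2 := by
    have hgap := g_abs_gap B T (by linarith) hT2
    have htri : |(B + Real.log B + 2/B) - (T + Real.log T + 2/T)|
        ≤ |B + Real.log B + 2/B - ℓ| + |T + Real.log T + 2/T - ℓ| := by
      have := abs_add_le (B + Real.log B + 2/B - ℓ) (ℓ - (T + Real.log T + 2/T))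
      rw [abs_sub_comm ℓ] at this
      calc |(B + Real.log B + 2/B) - (T + Real.log T + 2/T)|
          = |(B + Real.log B + 2/B - ℓ) + (ℓ - (T + Real.log T + 2/T))| := by ring_nf
        _ ≤ _ := this
    have h24 : 6/B^2 ≤ 24/ℓ^2 := by
      rw [div_le_div_iff₀ (by positivity) (by positivity)]
      have hp : (ℓ/2)^2 ≤ B^2 := pow_le_pow_left₀ (by linarith) hBge 2
      linarith
    have h24' : 24/ℓ^2 ≤ 6*(L^2/ℓ^2) := by
      rw [show 6*(L^2/ℓ^2) = 6*L^2/ℓ^2 by ring]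
      gcongr
      have hp : (2:ℝ)^2 ≤ L^2 := pow_le_pow_left₀ (by norm_num) hb 2
      linarith
    calc |B - T| ≤ |(B + Real.log B + 2/B) - (T + Real.log T + 2/T)| := hgap
      _ ≤ |B + Real.log B + 2/B - ℓ| + |T + Real.log T + 2/T - ℓ| := htri
      _ ≤ 6/B^2 + 7*L^2/ℓ^2 := by exact add_le_add hineq hgT
      _ ≤ 24/ℓ^2 + 7*L^2/ℓ^2 := by linarith
      _ = 24/ℓ^2 + 7*(L^2/ℓ^2) := by ring
      _ ≤ 6*(L^2/ℓ^2) + 7*(L^2/ℓ^2) := by linarith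
      _ = 16*L^2/ℓ^2 - 3*(L^2/ℓ^2) := by ring
      _ ≤ 16*L^2/ℓ^2 := by linarith
  -- from |B - T| to |β - √T|
  have hsT : Real.sqrt T ^ 2 = T := Real.sq_sqrt hT0.le
  have hsT0 : 0 < Real.sqrt T := Real.sqrt_pos.2 hT0
  have hsum : 0 < β + Real.sqrt T := by positivity
  have hmul : (β - Real.sqrt T) * (β + Real.sqrt T) = B - T := by
    have : (β - Real.sqrt T) * (β + Real.sqrt T) = β^2 - Real.sqrt T^2 := by ring
    rw [this, hsT, ← hBdef]
  have habs2 : |β - Real.sqrt T| * (β + Real.sqrt T) = |B - T| := by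
    rw [← abs_of_pos hsum, ← abs_mul, hmul]
  have hs_ge : Real.sqrt ℓ / 2 ≤ Real.sqrt T := by
    have h1 : Real.sqrt (ℓ/4) ≤ Real.sqrt T := Real.sqrt_le_sqrt (by linarith)
    have h2 : Real.sqrt (ℓ/4) = Real.sqrt ℓ / 2 := by
      rw [Real.sqrt_div hℓ0.le, show Real.sqrt 4 = 2 by
        rw [show (4:ℝ) = 2^2 by norm_num, Real.sqrt_sq (by norm_num : (0:ℝ) ≤ 2)]]
    rw [← h2]; exact h1
  have hsl0 : 0 < Real.sqrt ℓ := Real.sqrt_pos.2 hℓ0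
  have hfin : |β - Real.sqrt T| * (Real.sqrt ℓ / 2) ≤ 16*L^2/ℓ^2 := by
    calc |β - Real.sqrt T| * (Real.sqrt ℓ / 2)
        ≤ |β - Real.sqrt T| * (β + Real.sqrt T) :=
          mul_le_mul_of_nonneg_left (by linarith) (abs_nonneg _)
      _ = |B - T| := habs2
      _ ≤ 16*L^2/ℓ^2 := hBT
  have hrpow : ℓ^((5:ℝ)/2) = ℓ^2 * Real.sqrt ℓ := by
    rw [Real.sqrt_eq_rpow, show (ℓ:ℝ)^2 = ℓ^((2:ℕ):ℝ) by rw [Real.rpow_natCast],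
      ← Real.rpow_add hℓ0]
    norm_num
  have hd0 : (0:ℝ) < ℓ^2 * Real.sqrt ℓ := by positivity
  have hstep : |β - Real.sqrt T| ≤ 32*L^2/(ℓ^2 * Real.sqrt ℓ) := by
    rw [le_div_iff₀ hd0]
    calc |β - Real.sqrt T| * (ℓ^2 * Real.sqrt ℓ)
        = (|β - Real.sqrt T| * (Real.sqrt ℓ / 2)) * (2 * ℓ^2) := by ring
      _ ≤ (16*L^2/ℓ^2) * (2 * ℓ^2) := mul_le_mul_of_nonneg_right hfin (by positivity)
      _ = 32*L^2 := by field_simp; ring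
  rw [hrpow]
  calc |β - Real.sqrt T| ≤ 32*L^2/(ℓ^2 * Real.sqrt ℓ) := hstep
    _ ≤ 100*L^2/(ℓ^2 * Real.sqrt ℓ) := by
        gcongr
        linarith [sq_nonneg L]

lemma cdf_eq (x : ℝ) : stdNormalCDF x = 1 - (Real.sqrt (2 * Real.pi))⁻¹ * F x := by
  have h := intervalIntegral.integral_Iic_add_Ioi (b := x) (f := ψ)
    integrable_ψ.integrableOn integrable_ψ.integrableOn
  rw [ψ_total] at h
  have hs : (0:ℝ) < Real.sqrt (2 * Real.pi) := Real.sqrt_pos.2 (by positivity)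
  have : stdNormalCDF x = (Real.sqrt (2 * Real.pi))⁻¹ * ∫ t in Set.Iic x, ψ t := rfl
  rw [this, show (∫ t in Set.Iic x, ψ t) = Real.sqrt (2 * Real.pi) - F x by
    unfold F; linarith]
  field_simp

lemma F_of_hb (n : ℕ) (hn : 2 ≤ n) (x : ℝ) (hx : stdNormalCDF x = 1 - 1/(n:ℝ)) :
    F x = Real.sqrt (2 * Real.pi) / n := by
  have hs : (0:ℝ) < Real.sqrt (2 * Real.pi) := Real.sqrt_pos.2 (by positivity)
  have hn0 : (0:ℝ) < (n:ℝ) := by positivity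
  rw [cdf_eq] at hx
  have : (Real.sqrt (2 * Real.pi))⁻¹ * F x = 1/(n:ℝ) := by linarith
  field_simp at this ⊢
  linarith

lemma F2_pos : 0 < F 2 := by
  have h := (F_bounds 2 (by norm_num)).1
  have : (0:ℝ) < (1/2 - 1/2^3) * ψ 2 := by
    have := ψ_pos 2; nlinarith
  calc (0:ℝ) < (1/2 - 1/2^3) * ψ 2 := this
    _ ≤ F 2 := by convert h using 2 <;> norm_num

lemma F_anti {x y : ℝ} (h : x ≤ y) : F y ≤ F x := by
  apply setIntegral_mono_set integrable_ψ.integrableOn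
    (Filter.Eventually.of_forall (fun t => (ψ_pos t).le))
    (HasSubset.Subset.eventuallyLE (Set.Ioi_subset_Ioi h))

end BnAux

open BnAux in
set_option maxHeartbeats 1000000 in
/-- `bₙ − β̄ₙ = O((log log n)²/(log n)^{5/2})` as `n → ∞`, where
`β̄ₙ = (log(n²/(2π)) − log log(n²/(2π)) + (log log(n²/(2π)) − 2)/log(n²/(2π)))^{1/2}`. -/
theorem bn_asymptotic (b : ℕ → ℝ)
    (hb : ∀ n : ℕ, 2 ≤ n → stdNormalCDF (b n) = 1 - 1 / (n : ℝ)) :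
    (fun n : ℕ =>
        b n - Real.sqrt (Real.log ((n : ℝ) ^ 2 / (2 * Real.pi))
          - Real.log (Real.log ((n : ℝ) ^ 2 / (2 * Real.pi)))
          + (Real.log (Real.log ((n : ℝ) ^ 2 / (2 * Real.pi))) - 2)
              / Real.log ((n : ℝ) ^ 2 / (2 * Real.pi))))
      =O[atTop]
    (fun n : ℕ => (Real.log (Real.log n)) ^ 2 / (Real.log n) ^ ((5 : ℝ) / 2)) := by
  have hs : (0:ℝ) < Real.sqrt (2 * Real.pi) := Real.sqrt_pos.2 (by positivity)
  have htendn : Tendsto (fun n : ℕ => (n:ℝ)) atTop atTop := tendsto_natCast_atTop_atTop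
  have hsq : Tendsto (fun n : ℕ => (n:ℝ)^2/(2*Real.pi)) atTop atTop :=
    ((tendsto_pow_atTop two_ne_zero).comp htendn).atTop_div_const (by positivity)
  have hLtend : Tendsto (fun n : ℕ => Real.log ((n:ℝ)^2/(2*Real.pi))) atTop atTop :=
    Real.tendsto_log_atTop.comp hsq
  have hlogn : Tendsto (fun n : ℕ => Real.log n) atTop atTop :=
    Real.tendsto_log_atTop.comp htendn
  have hloglogn : Tendsto (fun n : ℕ => Real.log (Real.log n)) atTop atTop :=
    Real.tendsto_log_atTop.comp hlogn
  have hFbn : ∀ᶠ n : ℕ in atTop, F (b n) = Real.sqrt (2 * Real.pi)/n :=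
    eventually_atTop.2 ⟨2, fun n hn => F_of_hb n hn _ (hb n hn)⟩
  have hydec : Tendsto (fun n : ℕ => Real.sqrt (2 * Real.pi)/(n:ℝ)) atTop (𝓝 0) :=
    tendsto_const_div_atTop_nhds_zero_nat _
  have hbn2 : ∀ᶠ n : ℕ in atTop, 2 ≤ b n := by
    filter_upwards [hFbn, hydec.eventually_lt_const F2_pos] with n h1 h2
    by_contra hlt
    push_neg at hlt
    have h3 := F_anti hlt.le
    rw [h1] at h3
    linarith
  have hmills : ∀ᶠ n : ℕ in atTop,
      |(b n)^2 + Real.log ((b n)^2) + 2/(b n)^2 - Real.log ((n:ℝ)^2/(2*Real.pi))|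
        ≤ 6/(b n)^4 := by
    filter_upwards [hFbn, hbn2, eventually_ge_atTop 1] with n h1 h2 h3
    have hn0 : (0:ℝ) < n := by exact_mod_cast h3
    have hy : 0 < Real.sqrt (2 * Real.pi)/(n:ℝ) := by positivity
    have hm := mills_log (b n) _ h2 hy h1
    have harg : 1/(Real.sqrt (2 * Real.pi)/(n:ℝ))^2 = (n:ℝ)^2/(2*Real.pi) := by
      rw [div_pow, Real.sq_sqrt (by positivity : (0:ℝ) ≤ 2*Real.pi)]
      field_simp
    rw [harg] at hm
    exact hm
  have hkey := hLtend.eventually key_eventually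
  have hmain : ∀ᶠ n : ℕ in atTop,
      |b n - Real.sqrt (Real.log ((n : ℝ) ^ 2 / (2 * Real.pi))
          - Real.log (Real.log ((n : ℝ) ^ 2 / (2 * Real.pi)))
          + (Real.log (Real.log ((n : ℝ) ^ 2 / (2 * Real.pi))) - 2)
              / Real.log ((n : ℝ) ^ 2 / (2 * Real.pi)))|
        ≤ 100 * (Real.log (Real.log ((n:ℝ)^2/(2*Real.pi))))^2
            / (Real.log ((n:ℝ)^2/(2*Real.pi)))^((5:ℝ)/2) := by
    filter_upwards [hkey, hmills, hbn2] with n hk hm h2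
    exact hk (b n) h2 hm
  apply IsBigO.of_bound 400
  filter_upwards [hmain, hlogn.eventually_ge_atTop (2 + Real.log (2*Real.pi)),
    hloglogn.eventually_ge_atTop 1, eventually_ge_atTop 2] with n h1 h2 h3 hn2
  have hn0 : (0:ℝ) < n := by
    have : (2:ℝ) ≤ (n:ℝ) := by exact_mod_cast hn2
    linarith
  set l := Real.log ((n:ℝ)^2/(2*Real.pi)) with hl_def
  have hpi1 : (1:ℝ) ≤ 2*Real.pi := by nlinarith [Real.pi_gt_three]
  have hlog2pi : 0 ≤ Real.log (2*Real.pi) := Real.log_nonneg hpi1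
  have hleq : l = 2*Real.log n - Real.log (2*Real.pi) := by
    rw [hl_def, Real.log_div (by positivity) (by positivity), Real.log_pow]
    push_cast; ring
  have hlogn2 : 2 ≤ Real.log n := by linarith
  have hl_ge : Real.log n ≤ l := by rw [hleq]; linarith
  have hl_le : l ≤ 2*Real.log n := by rw [hleq]; linarith
  have hl2 : (2:ℝ) ≤ l := by linarith
  have hl0 : (0:ℝ) < l := by linarith
  have hlogl : Real.log l ≤ 2*Real.log (Real.log n) := by
    have ha : Real.log l ≤ Real.log (2*Real.log n) := Real.log_le_log hl0 hl_le
    rw [Real.log_mul two_ne_zero (by linarith : Real.log n ≠ 0)] at ha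
    have hlog2 : Real.log 2 ≤ 1 := by linarith [Real.log_two_lt_d9]
    linarith
  have hlogl0 : 0 ≤ Real.log l := Real.log_nonneg (by linarith)
  have hloglogn0 : 0 ≤ Real.log (Real.log n) := by linarith
  have hnum : 100*(Real.log l)^2 ≤ 400*(Real.log (Real.log n))^2 := by
    have hp : (Real.log l)^2 ≤ (2*Real.log (Real.log n))^2 :=
      pow_le_pow_left₀ hlogl0 hlogl 2
    nlinarith [hp]
  have hden : (Real.log n)^((5:ℝ)/2) ≤ l^((5:ℝ)/2) :=
    Real.rpow_le_rpow (by linarith) hl_ge (by norm_num)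
  have hden0 : 0 < (Real.log n)^((5:ℝ)/2) := Real.rpow_pos_of_pos (by linarith) _
  have hrle : 100*(Real.log l)^2 / l^((5:ℝ)/2)
      ≤ 400*(Real.log (Real.log n))^2 / (Real.log n)^((5:ℝ)/2) :=
    div_le_div₀ (by positivity) hnum hden0 hden
  rw [Real.norm_eq_abs, Real.norm_eq_abs,
    abs_of_nonneg (by positivity : (0:ℝ) ≤ (Real.log (Real.log n))^2/(Real.log n)^((5:ℝ)/2))]
  calc |b n - Real.sqrt (l - Real.log l + (Real.log l - 2)/l)|
      ≤ 100 * (Real.log l)^2 / l^((5:ℝ)/2) := h1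
    _ ≤ 400*(Real.log (Real.log n))^2 / (Real.log n)^((5:ℝ)/2) := hrle
    _ = 400 * ((Real.log (Real.log n))^2 / (Real.log n)^((5:ℝ)/2)) := by ring
end

section
/- As n → ∞, b_n − b_n* = O(1/(log n)^{3/2}). -/
open Real Filter Asymptotics

section Helpers
open MeasureTheory Topology


lemma gauss_integrable : Integrable (fun t : ℝ => Real.exp (-t ^ 2 / 2)) := by
  have h := integrable_exp_neg_mul_sq (show (0:ℝ) < 1/2 by norm_num)
  have he : (fun t : ℝ => Real.exp (-t ^ 2 / 2)) = fun t => Real.exp (-(1/2) * t ^ 2) := by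
    funext t; congr 1; ring
  rw [he]; exact h

lemma gauss_total : ∫ t : ℝ, Real.exp (-t ^ 2 / 2) = Real.sqrt (2 * Real.pi) := by
  have he : (fun t : ℝ => Real.exp (-t ^ 2 / 2)) = fun t => Real.exp (-(1/2) * t ^ 2) := by
    funext t; congr 1; ring
  rw [he, integral_gaussian]
  congr 1; ring

lemma mul_gauss_integrable : Integrable (fun t : ℝ => t * Real.exp (-t ^ 2 / 2)) := by
  have h := integrable_mul_exp_neg_mul_sq (show (0:ℝ) < 1/2 by norm_num)
  have he : (fun t : ℝ => t * Real.exp (-t ^ 2 / 2)) = fun t => t * Real.exp (-(1/2) * t ^ 2) := by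
    funext t; congr 2; ring
  rw [he]; exact h

lemma gauss_tendsto_zero : Tendsto (fun t : ℝ => Real.exp (-t ^ 2 / 2)) atTop (𝓝 0) := by
  have h2 : Tendsto (fun t : ℝ => -t ^ 2 / 2) atTop atBot := by
    apply Tendsto.atBot_div_const (by norm_num : (0:ℝ) < 2)
    exact tendsto_neg_atTop_atBot.comp (tendsto_pow_atTop two_ne_zero)
  exact Real.tendsto_exp_atBot.comp h2

lemma intIoi_mul_gauss (x : ℝ) :
    ∫ t in Set.Ioi x, t * Real.exp (-t ^ 2 / 2) = Real.exp (-x ^ 2 / 2) := by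
  have hderiv : ∀ t : ℝ, HasDerivAt (fun t : ℝ => -Real.exp (-t ^ 2 / 2))
      (t * Real.exp (-t ^ 2 / 2)) t := by
    intro t
    have h1 : HasDerivAt (fun t : ℝ => -t ^ 2 / 2) (-t) t := by
      have := ((hasDerivAt_pow 2 t).neg.div_const 2)
      refine this.congr_deriv ?_; push_cast; ring
    have := (h1.exp).neg
    refine this.congr_deriv ?_; ring
  have htend : Tendsto (fun t : ℝ => -Real.exp (-t ^ 2 / 2)) atTop (𝓝 0) := by
    simpa using gauss_tendsto_zero.neg
  rw [integral_Ioi_of_hasDerivAt_of_tendsto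
    (hderiv x).continuousAt.continuousWithinAt (fun t _ => hderiv t)
    mul_gauss_integrable.integrableOn htend]
  ring



lemma poly_gauss_integrable (x : ℝ) (hx : 0 < x) :
    IntegrableOn (fun t : ℝ => (1 - 3 * (t ^ 4)⁻¹) * Real.exp (-t ^ 2 / 2)) (Set.Ioi x) := by
  have hg : IntegrableOn (fun t : ℝ => (1 + 3 * (x ^ 4)⁻¹) * Real.exp (-t ^ 2 / 2))
      (Set.Ioi x) := (gauss_integrable.const_mul _).integrableOn
  apply hg.mono' ((by measurability :
      Measurable fun t : ℝ => (1 - 3 * (t ^ 4)⁻¹) * Real.exp (-t ^ 2 / 2)).aestronglyMeasurable)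
  filter_upwards [ae_restrict_mem measurableSet_Ioi] with t ht
  have htx : x < t := ht
  have h4 : (t ^ 4)⁻¹ ≤ (x ^ 4)⁻¹ := by
    exact inv_anti₀ (by positivity) (pow_le_pow_left₀ hx.le htx.le 4)
  have h4' : (0:ℝ) < (t ^ 4)⁻¹ := inv_pos.2 (pow_pos (hx.trans htx) 4)
  rw [norm_mul, Real.norm_eq_abs, Real.norm_eq_abs, abs_of_pos (Real.exp_pos _)]
  apply mul_le_mul_of_nonneg_right _ (Real.exp_pos _).le
  rw [abs_le]
  constructor <;> nlinarith

set_option maxHeartbeats 400000 in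
lemma intIoi_poly_gauss (x : ℝ) (hx : 0 < x) :
    ∫ t in Set.Ioi x, (1 - 3 * (t ^ 4)⁻¹) * Real.exp (-t ^ 2 / 2)
      = (x⁻¹ - (x ^ 3)⁻¹) * Real.exp (-x ^ 2 / 2) := by
  have hderiv : ∀ t : ℝ, 0 < t → HasDerivAt (fun t : ℝ => ((t ^ 3)⁻¹ - t⁻¹) * Real.exp (-t ^ 2 / 2))
      ((1 - 3 * (t ^ 4)⁻¹) * Real.exp (-t ^ 2 / 2)) t := by
    intro t ht
    have ht0 : t ≠ 0 := ht.ne'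
    have h1 : HasDerivAt (fun t : ℝ => (t ^ 3)⁻¹ - t⁻¹)
        (-(↑3 * t ^ 2) / (t ^ 3) ^ 2 - -(t ^ 2)⁻¹) t :=
      ((hasDerivAt_pow 3 t).inv (pow_ne_zero 3 ht0)).sub (hasDerivAt_inv ht0)
    have h2 : HasDerivAt (fun t : ℝ => -t ^ 2 / 2) (-t) t := by
      have := ((hasDerivAt_pow 2 t).neg.div_const 2)
      refine this.congr_deriv ?_; push_cast; ring
    have := h1.mul h2.exp
    refine this.congr_deriv ?_
    field_simp
    ring
  have htend : Tendsto (fun t : ℝ => ((t ^ 3)⁻¹ - t⁻¹) * Real.exp (-t ^ 2 / 2)) atTop (𝓝 0) := by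
    have ha : Tendsto (fun t : ℝ => (t ^ 3)⁻¹) atTop (𝓝 0) :=
      tendsto_inv_atTop_zero.comp (tendsto_pow_atTop three_ne_zero)
    have h1 : Tendsto (fun t : ℝ => (t ^ 3)⁻¹ - t⁻¹) atTop (𝓝 0) := by
      simpa using ha.sub tendsto_inv_atTop_zero
    simpa using h1.mul gauss_tendsto_zero
  rw [integral_Ioi_of_hasDerivAt_of_tendsto (hderiv x hx).continuousAt.continuousWithinAt
    (fun t ht => hderiv t (hx.trans ht)) (poly_gauss_integrable x hx) htend]
  ring



lemma G_le (x : ℝ) (hx : 0 < x) :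
    ∫ t in Set.Ioi x, Real.exp (-t ^ 2 / 2) ≤ x⁻¹ * Real.exp (-x ^ 2 / 2) := by
  have h : ∫ t in Set.Ioi x, Real.exp (-t ^ 2 / 2)
      ≤ ∫ t in Set.Ioi x, x⁻¹ * (t * Real.exp (-t ^ 2 / 2)) := by
    apply setIntegral_mono_on gauss_integrable.integrableOn
      ((mul_gauss_integrable.const_mul x⁻¹).integrableOn) measurableSet_Ioi
    intro t ht
    have htx : x < t := ht
    have he := (Real.exp_pos (-t ^ 2 / 2)).le
    rw [← mul_assoc]
    have h1 : 1 ≤ x⁻¹ * t := by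
      have := mul_le_mul_of_nonneg_left htx.le (inv_pos.2 hx).le
      rwa [inv_mul_cancel₀ hx.ne'] at this
    exact le_mul_of_one_le_left he h1
  calc ∫ t in Set.Ioi x, Real.exp (-t ^ 2 / 2)
      ≤ ∫ t in Set.Ioi x, x⁻¹ * (t * Real.exp (-t ^ 2 / 2)) := h
    _ = x⁻¹ * ∫ t in Set.Ioi x, t * Real.exp (-t ^ 2 / 2) := by
        rw [MeasureTheory.integral_const_mul]
    _ = x⁻¹ * Real.exp (-x ^ 2 / 2) := by rw [intIoi_mul_gauss]

lemma le_G (x : ℝ) (hx : 0 < x) :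
    (x⁻¹ - (x ^ 3)⁻¹) * Real.exp (-x ^ 2 / 2) ≤ ∫ t in Set.Ioi x, Real.exp (-t ^ 2 / 2) := by
  rw [← intIoi_poly_gauss x hx]
  apply setIntegral_mono_on (poly_gauss_integrable x hx) gauss_integrable.integrableOn
    measurableSet_Ioi
  intro t ht
  have htx : x < t := ht
  have h4' : (0:ℝ) < (t ^ 4)⁻¹ := inv_pos.2 (pow_pos (hx.trans htx) 4)
  nlinarith [(Real.exp_pos (-t ^ 2 / 2)).le]

lemma h_anti {u v : ℝ} (hu : 0 < u) (huv : u < v) :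
    v⁻¹ * Real.exp (-v ^ 2 / 2) < u⁻¹ * Real.exp (-u ^ 2 / 2) := by
  have h1 : v⁻¹ < u⁻¹ := inv_strictAnti₀ hu huv
  have h2 : Real.exp (-v ^ 2 / 2) < Real.exp (-u ^ 2 / 2) := by
    apply Real.exp_lt_exp.2; nlinarith
  exact mul_lt_mul'' h1 h2 (inv_pos.2 (hu.trans huv)).le (Real.exp_pos _).le

end Helpers

open MeasureTheory Topology in
/-- `bₙ − bₙ* = O(1/(log n)^{3/2})` as `n → ∞`. -/
theorem bn_sub_bnstar (b bs : ℕ → ℝ)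
    (hb : ∀ n : ℕ, 2 ≤ n → stdNormalCDF (b n) = 1 - 1 / (n : ℝ))
    (hbs : ∀ n : ℕ, 2 ≤ n → 0 < bs n ∧
      (Real.sqrt (2 * Real.pi))⁻¹ * (bs n)⁻¹ * Real.exp (-(bs n) ^ 2 / 2) = 1 / (n : ℝ)) :
    (fun n : ℕ => b n - bs n) =O[atTop]
      (fun n : ℕ => 1 / (Real.log n) ^ ((3 : ℝ) / 2)) := by
  obtain ⟨c, hc⟩ : ∃ x, Real.sqrt (2 * Real.pi) = x := ⟨_, rfl⟩
  have hc0 : 0 < c := by rw [← hc]; positivity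
  have hc3 : c ≤ 3 := by
    rw [← hc, show (3:ℝ) = Real.sqrt 9 by
      rw [show (9:ℝ) = 3^2 by norm_num, Real.sqrt_sq (by norm_num)]]
    exact Real.sqrt_le_sqrt (by nlinarith [Real.pi_le_four])
  -- the key reformulation of hb
  have key : ∀ n : ℕ, 2 ≤ n →
      (∫ t in Set.Ioi (b n), Real.exp (-t ^ 2 / 2)) = c / n := by
    intro n hn
    have hn0 : (0:ℝ) < n := by exact_mod_cast (by omega : 0 < n)
    have h1 := hb n hn
    unfold stdNormalCDF at h1
    rw [hc] at h1
    have h2 : (∫ t in Set.Iic (b n), Real.exp (-t ^ 2 / 2))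
        + ∫ t in Set.Ioi (b n), Real.exp (-t ^ 2 / 2) = c := by
      rw [intervalIntegral.integral_Iic_add_Ioi gauss_integrable.integrableOn
        gauss_integrable.integrableOn, gauss_total, hc]
    have h3 : (∫ t in Set.Iic (b n), Real.exp (-t ^ 2 / 2)) = c * (1 - 1/(n:ℝ)) := by
      calc (∫ t in Set.Iic (b n), Real.exp (-t ^ 2 / 2))
          = c * (c⁻¹ * ∫ t in Set.Iic (b n), Real.exp (-t ^ 2 / 2)) := by
            rw [← mul_assoc, mul_inv_cancel₀ hc0.ne', one_mul]
        _ = c * (1 - 1/(n:ℝ)) := by rw [h1]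
    have h4 : c * (1/(n:ℝ)) = c / n := mul_one_div c n
    have h5 : c * (1 - 1/(n:ℝ)) = c - c * (1/(n:ℝ)) := by ring
    linarith
  -- eventually b n ≥ 2
  have hε : 0 < ∫ t in Set.Ioi (2:ℝ), Real.exp (-t ^ 2 / 2) := by
    refine lt_of_lt_of_le ?_ (le_G 2 two_pos)
    have := Real.exp_pos (-(2:ℝ) ^ 2 / 2)
    norm_num
    nlinarith
  have ev1 : ∀ᶠ n : ℕ in atTop, 2 ≤ b n := by
    filter_upwards [(tendsto_const_div_atTop_nhds_zero_nat c).eventually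
      (gt_mem_nhds hε), eventually_ge_atTop 2] with n h1 h2
    by_contra hcon
    push_neg at hcon
    have hsub : (∫ t in Set.Ioi (2:ℝ), Real.exp (-t ^ 2 / 2))
        ≤ ∫ t in Set.Ioi (b n), Real.exp (-t ^ 2 / 2) := by
      apply setIntegral_mono_set gauss_integrable.integrableOn
        (Filter.Eventually.of_forall fun t => (Real.exp_pos _).le)
        ((Set.Ioi_subset_Ioi hcon.le).eventuallyLE)
    rw [key n h2] at hsub
    exact absurd (lt_of_le_of_lt hsub h1) (lt_irrefl _)
  have ev2 : ∀ᶠ n : ℕ in atTop, (22:ℝ) ≤ Real.log n :=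
    (Real.tendsto_log_atTop.comp tendsto_natCast_atTop_atTop).eventually_ge_atTop 22
  rw [isBigO_iff]
  refine ⟨6, ?_⟩
  filter_upwards [ev1, ev2, eventually_ge_atTop 2] with n hb2 hlog hn2
  have hn0 : (0:ℝ) < n := by exact_mod_cast (by omega : 0 < n)
  have hG := key n hn2
  obtain ⟨hS0, hSeq⟩ := hbs n hn2
  rw [hc] at hSeq
  obtain ⟨B, hBdef⟩ : ∃ x, b n = x := ⟨_, rfl⟩
  obtain ⟨S, hSdef⟩ : ∃ x, bs n = x := ⟨_, rfl⟩
  rw [hBdef] at hb2 hG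
  rw [hSdef] at hS0 hSeq
  rw [hBdef, hSdef]
  have hB0 : (0:ℝ) < B := lt_of_lt_of_le two_pos hb2
  have hSeq' : S⁻¹ * Real.exp (-S ^ 2 / 2) = c / n := by
    have h := congrArg (fun y => c * y) hSeq
    rw [← mul_assoc, ← mul_assoc, mul_inv_cancel₀ hc0.ne', one_mul, mul_one_div] at h
    exact h
  have hup : c / n ≤ B⁻¹ * Real.exp (-B ^ 2 / 2) := hG ▸ G_le B hB0
  have hlow : (B⁻¹ - (B ^ 3)⁻¹) * Real.exp (-B ^ 2 / 2) ≤ c / n := hG ▸ le_G B hB0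
  -- B ≤ S
  have hBS : B ≤ S := by
    by_contra h
    push_neg at h
    have := h_anti hS0 h
    rw [hSeq'] at this
    linarith
  -- B² ≥ log n / 2
  have hBsq : Real.log n / 2 ≤ B ^ 2 := by
    by_contra h
    push_neg at h
    have h34 : (3/4 : ℝ) * B⁻¹ ≤ B⁻¹ - (B ^ 3)⁻¹ := by
      have h1 : (4:ℝ) * B ≤ B ^ 3 := by
        have hp : 0 ≤ B * ((B - 2) * (B + 2)) :=
          mul_nonneg hB0.le (mul_nonneg (by linarith) (by linarith))
        have he : B * ((B - 2) * (B + 2)) = B ^ 3 - 4 * B := by ring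
        linarith
      have h2 : (B ^ 3)⁻¹ ≤ ((4:ℝ) * B)⁻¹ := inv_anti₀ (by positivity) h1
      rw [mul_inv] at h2
      have h3 : (0:ℝ) < B⁻¹ := by positivity
      linarith
    have h5 : (3/4:ℝ) * B⁻¹ * Real.exp (-B ^ 2 / 2) ≤ c / n :=
      le_trans (mul_le_mul_of_nonneg_right h34 (Real.exp_pos _).le) hlow
    have h7 : Real.exp (-B ^ 2 / 2) ≤ B⁻¹ := by
      have hBe : B ≤ Real.exp (B ^ 2 / 2) := by
        have := Real.add_one_le_exp (B ^ 2 / 2)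
        linarith [sq_nonneg (B - 1)]
      have h2 : Real.exp (-B ^ 2 / 2) = (Real.exp (B ^ 2 / 2))⁻¹ := by
        rw [← Real.exp_neg]; congr 1; ring
      rw [h2]
      exact inv_anti₀ hB0 hBe
    have h6 : Real.exp (-B ^ 2) ≤ B⁻¹ * Real.exp (-B ^ 2 / 2) := by
      calc Real.exp (-B ^ 2) = Real.exp (-B ^ 2 / 2) * Real.exp (-B ^ 2 / 2) := by
            rw [← Real.exp_add]; congr 1; ring
        _ ≤ B⁻¹ * Real.exp (-B ^ 2 / 2) :=
            mul_le_mul_of_nonneg_right h7 (Real.exp_pos _).le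
    have h8 : Real.exp (-B ^ 2) ≤ 4 / n := by
      have h9 : (3/4:ℝ) * Real.exp (-B ^ 2) ≤ c / n := by linarith [h6, h5]
      have h10 : c / (n:ℝ) ≤ 3 / n := by gcongr
      have h11 := le_trans h9 h10
      rw [le_div_iff₀ hn0] at h11 ⊢
      linarith
    have h13 : Real.exp (-(Real.log n / 2)) < 4 / n :=
      lt_of_lt_of_le (Real.exp_lt_exp.2 (by linarith)) h8
    have h14 := mul_lt_mul_of_pos_right h13 (Real.exp_pos (Real.log n))
    rw [← Real.exp_add] at h14
    rw [show -(Real.log n / 2) + Real.log n = Real.log n / 2 by ring] at h14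
    rw [Real.exp_log hn0] at h14
    rw [show 4 / (n:ℝ) * n = 4 by field_simp] at h14
    have h15 := Real.add_one_le_exp (Real.log n / 2)
    linarith
  -- S ≤ B + 2/B³
  have hSle : S ≤ B + 2 * (B ^ 3)⁻¹ := by
    obtain ⟨D, hD⟩ : ∃ x, x = B + 2 * (B ^ 3)⁻¹ := ⟨_, rfl⟩
    rw [← hD]
    have hBD : B < D := by
      have : (0:ℝ) < 2 * (B ^ 3)⁻¹ := by positivity
      linarith
    have hD0 : 0 < D := hB0.trans hBD
    have hu4 : (B ^ 2)⁻¹ ≤ 1/4 := by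
      have h1 : (4:ℝ) ≤ B ^ 2 := by linarith [sq_nonneg (B - 2)]
      have h2 := inv_anti₀ (by norm_num : (0:ℝ) < 4) h1
      norm_num at h2
      linarith
    have hu0 : (0:ℝ) < (B ^ 2)⁻¹ := by positivity
    have hDD : B ^ 2 + 4 * (B ^ 2)⁻¹ ≤ D ^ 2 := by
      have e1 : B * (B ^ 3)⁻¹ = (B ^ 2)⁻¹ := by
        field_simp
      have e2 : D ^ 2 = B ^ 2 + 4 * (B * (B ^ 3)⁻¹) + 4 * ((B ^ 3)⁻¹) ^ 2 := by
        rw [hD]; ring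
      linarith [e1, e2, sq_nonneg ((B ^ 3)⁻¹)]
    have hexp1 : Real.exp (-D ^ 2 / 2)
        ≤ Real.exp (-B ^ 2 / 2) * Real.exp (-(2 * (B ^ 2)⁻¹)) := by
      rw [← Real.exp_add]
      apply Real.exp_le_exp.2
      linarith
    have hexp2 : Real.exp (-(2 * (B ^ 2)⁻¹)) ≤ 1 - (B ^ 2)⁻¹ := by
      have h1 := Real.add_one_le_exp (2 * (B ^ 2)⁻¹)
      rw [Real.exp_neg]
      have h3 : (Real.exp (2 * (B ^ 2)⁻¹))⁻¹ ≤ (1 + 2 * (B ^ 2)⁻¹)⁻¹ :=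
        inv_anti₀ (by positivity) (by linarith)
      have h5 : (1:ℝ) ≤ (1 + 2 * (B ^ 2)⁻¹) * (1 - (B ^ 2)⁻¹) := by
        have hsq : (B ^ 2)⁻¹ * (B ^ 2)⁻¹ ≤ (B ^ 2)⁻¹ * (1/4) :=
          mul_le_mul_of_nonneg_left hu4 hu0.le
        have he : (1 + 2 * (B ^ 2)⁻¹) * (1 - (B ^ 2)⁻¹)
            = 1 + (B ^ 2)⁻¹ - 2 * ((B ^ 2)⁻¹ * (B ^ 2)⁻¹) := by ring
        linarith
      have h4 : (1 + 2 * (B ^ 2)⁻¹)⁻¹ ≤ 1 - (B ^ 2)⁻¹ := by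
        calc (1 + 2 * (B ^ 2)⁻¹)⁻¹ = (1 + 2 * (B ^ 2)⁻¹)⁻¹ * 1 := (mul_one _).symm
          _ ≤ (1 + 2 * (B ^ 2)⁻¹)⁻¹ * ((1 + 2 * (B ^ 2)⁻¹) * (1 - (B ^ 2)⁻¹)) :=
              mul_le_mul_of_nonneg_left h5 (by positivity)
          _ = 1 - (B ^ 2)⁻¹ := by
              rw [← mul_assoc, inv_mul_cancel₀ (by positivity), one_mul]
      linarith
    have hkey : D⁻¹ * Real.exp (-D ^ 2 / 2)
        ≤ (B⁻¹ - (B ^ 3)⁻¹) * Real.exp (-B ^ 2 / 2) := by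
      have hDinv : D⁻¹ ≤ B⁻¹ := inv_anti₀ hB0 hBD.le
      have hfac : B⁻¹ - (B ^ 3)⁻¹ = B⁻¹ * (1 - (B ^ 2)⁻¹) := by
        field_simp
      calc D⁻¹ * Real.exp (-D ^ 2 / 2)
          ≤ B⁻¹ * (Real.exp (-B ^ 2 / 2) * Real.exp (-(2 * (B ^ 2)⁻¹))) :=
            mul_le_mul hDinv hexp1 (Real.exp_pos _).le (by positivity)
        _ ≤ B⁻¹ * (Real.exp (-B ^ 2 / 2) * (1 - (B ^ 2)⁻¹)) :=
            mul_le_mul_of_nonneg_left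
              (mul_le_mul_of_nonneg_left hexp2 (Real.exp_pos _).le) (by positivity)
        _ = (B⁻¹ - (B ^ 3)⁻¹) * Real.exp (-B ^ 2 / 2) := by rw [hfac]; ring
    by_contra hcon
    push_neg at hcon
    have := h_anti hD0 hcon
    rw [hSeq'] at this
    linarith
  -- final estimate
  have hL : (0:ℝ) < Real.log n := by linarith
  have hLr : 0 < (Real.log n) ^ ((3:ℝ)/2) := Real.rpow_pos_of_pos hL _
  have hB3 : (0:ℝ) < B ^ 3 := by positivity
  have hcube : (Real.log n) ^ ((3:ℝ)/2) ≤ 3 * B ^ 3 := by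
    have h1 : Real.log n ≤ 2 * B ^ 2 := by linarith
    have h2 : (Real.log n) ^ ((3:ℝ)/2) ≤ (2 * B ^ 2) ^ ((3:ℝ)/2) :=
      Real.rpow_le_rpow hL.le h1 (by norm_num)
    have h3 : ((2:ℝ) * B ^ 2) ^ ((3:ℝ)/2) = 2 ^ ((3:ℝ)/2) * (B ^ 2 : ℝ) ^ ((3:ℝ)/2) :=
      Real.mul_rpow (by norm_num) (by positivity)
    have h4 : ((B:ℝ) ^ 2) ^ ((3:ℝ)/2) = B ^ 3 := by
      rw [← Real.rpow_natCast B 2, ← Real.rpow_mul hB0.le]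
      rw [show ((2:ℕ):ℝ) * ((3:ℝ)/2) = ((3:ℕ):ℝ) by norm_num, Real.rpow_natCast]
    have h5 : (2:ℝ) ^ ((3:ℝ)/2) ≤ 3 := by
      have ha : (0:ℝ) ≤ (2:ℝ) ^ ((3:ℝ)/2) := Real.rpow_nonneg (by norm_num) _
      have hb8 : ((2:ℝ) ^ ((3:ℝ)/2)) ^ (2:ℕ) = 8 := by
        rw [← Real.rpow_natCast ((2:ℝ) ^ ((3:ℝ)/2)) 2,
          ← Real.rpow_mul (by norm_num : (0:ℝ) ≤ 2)]
        rw [show (3:ℝ)/2 * ((2:ℕ):ℝ) = ((3:ℕ):ℝ) by norm_num, Real.rpow_natCast]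
        norm_num
      linarith [hb8, sq_nonneg ((2:ℝ) ^ ((3:ℝ)/2) - 3),
        sq_abs ((2:ℝ) ^ ((3:ℝ)/2))]
    have h6 : (2:ℝ) ^ ((3:ℝ)/2) * ((B:ℝ) ^ 2) ^ ((3:ℝ)/2)
        = (2:ℝ) ^ ((3:ℝ)/2) * B ^ 3 := by rw [h4]
    linarith [h2, h3, h6, mul_le_mul_of_nonneg_right h5 hB3.le]
  rw [Real.norm_eq_abs, Real.norm_eq_abs, abs_sub_comm, abs_of_nonneg (sub_nonneg.2 hBS),
    abs_of_pos (by positivity : (0:ℝ) < 1 / (Real.log n) ^ ((3:ℝ)/2))]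
  have hfin : 2 * (B ^ 3)⁻¹ ≤ 6 * (1 / (Real.log n) ^ ((3:ℝ)/2)) := by
    rw [mul_one_div, ← div_eq_mul_inv, div_le_div_iff₀ hB3 hLr]
    linarith [hcube]
  linarith
end
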